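/- arXiv:1912.04553 — 5 statements merged into one kernel-verified Lean document; each statement's English description precedes it below -/
import Mathlib

section
/- Let L be a lamination system on S^1 and {I_n} a sequence in L with I_{n+1} ⊆ I_n for all n and ∪_n I_n* = J for some J ∈ L. Then the interior of ∩_n I_n equals J*, and in particular J* ∈ L. -/
open Set Topology

noncomputable section

/-- Stereographic projection from `1 ∈ S¹`. -/
def sproj (z : Circle) : ℝ := (z : ℂ).im / ((z : ℂ).re - 1)

/-- `(a,b,c)` is a positively oriented triple on `S¹`. -/
def posOri (a b c : Circle) : Prop :=
  a ≠ b ∧ b ≠ c ∧ c ≠ a ∧ sproj (a⁻¹ * b) < sproj (a⁻¹ * c)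

/-- The nondegenerate open interval `(u,v)` on `S¹`. -/
def oInt (u v : Circle) : Set Circle := {p | posOri u p v}

/-- `I` is a nondegenerate open interval on `S¹`. -/
def IsND (I : Set Circle) : Prop := ∃ u v : Circle, u ≠ v ∧ I = oInt u v

/-- The dual interval `I* = (v,u)` of `I = (u,v)`, i.e. the interior of the complement. -/
def dual (I : Set Circle) : Set Circle := interior Iᶜ

/-- The leaf `{I, I*}` lies on `J`. -/
def LiesOn (I J : Set Circle) : Prop := I ⊆ J ∨ dual I ⊆ J

/-- A lamination system on `S¹`. -/
structure LamSys (L : Set (Set Circle)) : Prop where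
  nonempty : L.Nonempty
  nd : ∀ I ∈ L, IsND I
  dualMem : ∀ I ∈ L, dual I ∈ L
  unlinked : ∀ I ∈ L, ∀ J ∈ L, LiesOn I J ∨ LiesOn I (dual J)
  chainUnion : ∀ f : ℕ → Set Circle, (∀ n, f n ∈ L) → (∀ n, f n ⊆ f (n + 1)) →
    IsND (⋃ n, f n) → (⋃ n, f n) ∈ L

/-- The leaf associated to an interval. -/
def leafOf (I : Set Circle) : Set (Set Circle) := {I, dual I}

/-- `liminf` of a sequence of sets. -/
def sLiminf (f : ℕ → Set Circle) : Set Circle := ⋃ k, ⋂ n, ⋂ (_ : k ≤ n), f n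

/-- `limsup` of a sequence of sets. -/
def sLimsup (f : ℕ → Set Circle) : Set Circle := ⋂ k, ⋃ n, ⋃ (_ : k ≤ n), f n

/-- The sequence of intervals converges to `J`. -/
def ConvTo (f : ℕ → Set Circle) (J : Set Circle) : Prop :=
  J ⊆ sLiminf f ∧ sLiminf f ⊆ sLimsup f ∧ sLimsup f ⊆ closure J

/-- A gap of a lamination system. -/
def IsGap (L G : Set (Set Circle)) : Prop :=
  G ⊆ L ∧ (∀ I ∈ G, ∀ J ∈ G, I ≠ J → I ∩ J = ∅) ∧ ∀ I ∈ L, ∃ J ∈ G, LiesOn I J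

/-- A gap which is a leaf. -/
def IsLeafGap (G : Set (Set Circle)) : Prop := ∃ I, G = leafOf I

/-- The vertex (endpoint) set of a gap. -/
def vset (G : Set (Set Circle)) : Set Circle := (⋃₀ G)ᶜ

/-- A very full lamination system: every gap is an ideal polygon (finite vertex set). -/
def VeryFull (L : Set (Set Circle)) : Prop := ∀ G, IsGap L G → (vset G).Finite

/-- The set of endpoints of leaves of `L`. -/
def ELset (L : Set (Set Circle)) : Set Circle := ⋃ I ∈ L, frontier I

/-- A rainbow at `p`. -/
def Rainbow (L : Set (Set Circle)) (p : Circle) (f : ℕ → Set Circle) : Prop :=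
  (∀ n, f n ∈ L) ∧ (∀ n, f (n + 1) ⊆ f n) ∧ (⋂ n, f n) = {p}

/-- An `I`-side sequence of leaves. -/
def SideSeq (L : Set (Set Circle)) (I : Set Circle) (f : ℕ → Set Circle) : Prop :=
  (∀ n, f n ∈ L) ∧ (∀ n, I ∉ leafOf (f n)) ∧ (∀ n, LiesOn (f n) I) ∧ ConvTo f I

/-- `I` is isolated in `L`. -/
def IsolatedInt (L : Set (Set Circle)) (I : Set Circle) : Prop := ∀ f, ¬ SideSeq L I f

/-- `C_p^I`. -/
def Cset (L : Set (Set Circle)) (p : Circle) (I : Set Circle) : Set (Set Circle) :=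
  {J ∈ L | p ∈ J ∧ J ⊆ I}

/-- The group of self-homeomorphisms of the circle (composition as multiplication). -/
instance : Group (Circle ≃ₜ Circle) where
  mul g h := h.trans g
  one := Homeomorph.refl _
  inv := Homeomorph.symm
  mul_assoc _ _ _ := Homeomorph.ext fun _ => rfl
  one_mul _ := Homeomorph.ext fun _ => rfl
  mul_one _ := Homeomorph.ext fun _ => rfl
  inv_mul_cancel g := Homeomorph.ext fun x => g.symm_apply_apply x

/-- An orientation-preserving homeomorphism of the circle. -/
def OrientPres (g : Circle ≃ₜ Circle) : Prop :=
  ∀ a b c, posOri a b c → posOri (g a) (g b) (g c)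

/-- `L` is invariant under a subgroup `G` of homeomorphisms. -/
def GInv (G : Subgroup (Circle ≃ₜ Circle)) (L : Set (Set Circle)) : Prop :=
  ∀ g ∈ G, ∀ I ∈ L, (⇑g) '' I ∈ L

/-- The image of a gap under a homeomorphism. -/
def gapIm (g : Circle ≃ₜ Circle) (P : Set (Set Circle)) : Set (Set Circle) :=
  (fun I => (⇑g) '' I) '' P

/-- `v_G(P)`, the union of the vertex sets of the `G`-orbit of the gap `P`. -/
def vOrb (G : Subgroup (Circle ≃ₜ Circle)) (P : Set (Set Circle)) : Set Circle :=
  ⋃ g ∈ G, vset (gapIm g P)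

/-- A loose lamination system: distinct non-leaf gaps have disjoint vertex sets. -/
def Loose (L : Set (Set Circle)) : Prop :=
  ∀ P Q, IsGap L P → IsGap L Q → ¬ IsLeafGap P → ¬ IsLeafGap Q → P ≠ Q →
    vset P ∩ vset Q = ∅

/-- A pseudo-fibered triple `(L₁, L₂, G)`. -/
structure PFib (L₁ L₂ : Set (Set Circle)) (G : Subgroup (Circle ≃ₜ Circle)) : Prop where
  orient : ∀ g ∈ G, OrientPres g
  fg : G.FG
  lam₁ : LamSys L₁
  lam₂ : LamSys L₂
  inv₁ : GInv G L₁
  inv₂ : GInv G L₂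
  veryFull₁ : VeryFull L₁
  veryFull₂ : VeryFull L₂
  loose₁ : Loose L₁
  loose₂ : Loose L₂
  disjEnds : ELset L₁ ∩ ELset L₂ = ∅

end
noncomputable section

namespace Aux5

lemma normSq_circle (z : Circle) : (z : ℂ).re ^ 2 + (z : ℂ).im ^ 2 = 1 := by
  have := Circle.normSq_coe z
  rw [Complex.normSq_apply] at this
  nlinarith [this]

lemma re_ne_one {z : Circle} (hz : z ≠ 1) : (z : ℂ).re ≠ 1 := by
  intro h
  apply hz
  have h2 := normSq_circle z
  rw [h] at h2
  have him : (z : ℂ).im = 0 := by nlinarith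
  apply Circle.ext
  apply Complex.ext
  · simpa using h
  · simpa using him

/-- inverse stereographic projection -/
def phi (t : ℝ) : Circle :=
  ⟨((t^2 - 1)/(t^2 + 1) : ℝ) + ((-2*t/(t^2 + 1) : ℝ)) * Complex.I, by
    have ht : t^2 + 1 ≠ 0 := by positivity
    show _ ∈ Metric.sphere (0:ℂ) 1
    rw [mem_sphere_zero_iff_norm, Complex.norm_def]
    rw [show (1:ℝ) = Real.sqrt 1 by simp]
    congr 1
    rw [Complex.normSq_apply]
    simp only [Complex.add_re, Complex.ofReal_re, Complex.mul_re, Complex.I_re, Complex.I_im,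
      Complex.ofReal_im, Complex.add_im, Complex.mul_im]
    field_simp
    ring⟩

lemma phi_re (t : ℝ) : ((phi t : Circle) : ℂ).re = (t^2 - 1)/(t^2 + 1) := by
  show (_ + _ : ℂ).re = _
  simp only [Complex.add_re, Complex.ofReal_re, Complex.mul_re, Complex.I_re, Complex.I_im,
    Complex.ofReal_im, mul_zero, mul_one, zero_sub, sub_zero, mul_comm]
  simp

lemma phi_im (t : ℝ) : ((phi t : Circle) : ℂ).im = -2*t/(t^2 + 1) := by
  show (_ + _ : ℂ).im = _
  simp only [Complex.add_im, Complex.ofReal_im, Complex.mul_im, Complex.I_re, Complex.I_im,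
    Complex.ofReal_re, mul_zero, mul_one, zero_add, zero_mul, add_zero]

lemma phi_ne_one (t : ℝ) : phi t ≠ 1 := by
  intro h
  have h1 : ((phi t : Circle) : ℂ).re = 1 := by rw [h]; simp
  rw [phi_re] at h1
  have ht : t^2 + 1 ≠ 0 := by positivity
  rw [div_eq_one_iff_eq ht] at h1
  nlinarith

lemma sproj_phi (t : ℝ) : sproj (phi t) = t := by
  have ht : t^2 + 1 ≠ 0 := by positivity
  have h2 : (t^2-1)/(t^2+1) - 1 = -2/(t^2+1) := by field_simp; ring
  rw [sproj, phi_re, phi_im, h2, div_div_div_cancel_right₀ (by positivity : (t^2+1:ℝ) ≠ 0)]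
  norm_num

lemma phi_sproj {z : Circle} (hz : z ≠ 1) : phi (sproj z) = z := by
  have ha : (z : ℂ).re ≠ 1 := re_ne_one hz
  have ha' : (z : ℂ).re - 1 ≠ 0 := sub_ne_zero.2 ha
  have hn := normSq_circle z
  set a := (z : ℂ).re with haa
  set b := (z : ℂ).im with hbb
  have hs : sproj z = b / (a - 1) := rfl
  apply Circle.ext
  apply Complex.ext
  · rw [phi_re, hs, ← haa]
    field_simp
    nlinarith [hn]
  · rw [phi_im, hs, ← hbb]
    field_simp
    linear_combination (-b) * hn

lemma sproj_inj {z w : Circle} (hz : z ≠ 1) (hw : w ≠ 1) (h : sproj z = sproj w) : z = w := by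
  rw [← phi_sproj hz, ← phi_sproj hw, h]

lemma continuous_phi : Continuous phi := by
  have ht : ∀ t : ℝ, t^2 + 1 ≠ 0 := fun t => by positivity
  apply Continuous.subtype_mk
  apply Continuous.add
  · exact Complex.continuous_ofReal.comp (by fun_prop (disch := intros; positivity))
  · exact (Complex.continuous_ofReal.comp (by fun_prop (disch := intros; positivity))).mul continuous_const

lemma continuousAt_sproj {z : Circle} (hz : z ≠ 1) : ContinuousAt sproj z := by
  have h1 : (z : ℂ).re - 1 ≠ 0 := sub_ne_zero.2 (re_ne_one hz)
  have hc : Continuous fun w : Circle => ((w : ℂ).im) :=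
    Complex.continuous_im.comp continuous_subtype_val
  have hc2 : Continuous fun w : Circle => ((w : ℂ).re - 1) :=
    (Complex.continuous_re.comp continuous_subtype_val).sub continuous_const
  exact hc.continuousAt.div hc2.continuousAt h1

open Filter in
lemma tendsto_phi_atTop : Filter.Tendsto phi Filter.atTop (nhds 1) := by
  have hpow : Filter.Tendsto (fun t : ℝ => t^2 + 1) atTop atTop :=
    tendsto_atTop_add_const_right atTop 1 (tendsto_pow_atTop two_ne_zero)
  have hre : Filter.Tendsto (fun t : ℝ => (t^2 - 1)/(t^2 + 1)) atTop (nhds 1) := by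
    have h0 : Filter.Tendsto (fun t : ℝ => 2/(t^2+1)) atTop (nhds 0) :=
      Filter.Tendsto.div_atTop tendsto_const_nhds hpow
    have := h0.const_sub (1:ℝ)
    rw [sub_zero] at this
    apply this.congr'
    filter_upwards [eventually_gt_atTop 0] with t ht
    have : t^2 + 1 ≠ 0 := by positivity
    field_simp
    ring
  have him : Filter.Tendsto (fun t : ℝ => -2*t/(t^2 + 1)) atTop (nhds 0) := by
    have h1 : Filter.Tendsto (fun t : ℝ => t + 1/t) atTop atTop := by
      apply Filter.Tendsto.atTop_add_zero_eventuallyLE tendsto_id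
      filter_upwards [eventually_ge_atTop (0:ℝ)] with t ht
      positivity
    have h0 : Filter.Tendsto (fun t : ℝ => -2/(t + 1/t)) atTop (nhds 0) :=
      Filter.Tendsto.div_atTop tendsto_const_nhds h1
    apply h0.congr'
    filter_upwards [eventually_gt_atTop 0] with t ht
    have h2 : t + 1/t ≠ 0 := by positivity
    field_simp
  have hcoe : Filter.Tendsto (fun t => ((phi t : Circle) : ℂ)) atTop (nhds 1) := by
    have h : Filter.Tendsto (fun t => (((t^2 - 1)/(t^2 + 1) : ℝ) : ℂ)
        + (((-2*t/(t^2 + 1) : ℝ)) : ℂ) * Complex.I) atTop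
        (nhds ((((1:ℝ)):ℂ) + (((0:ℝ)):ℂ) * Complex.I)) :=
      ((Complex.continuous_ofReal.tendsto _).comp hre).add
        (((Complex.continuous_ofReal.tendsto _).comp him).mul tendsto_const_nhds)
    have he : ((((1:ℝ)):ℂ) + (((0:ℝ)):ℂ) * Complex.I) = 1 := by norm_num
    rw [he] at h
    exact h
  refine tendsto_subtype_rng.2 ?_
  exact hcoe

def Tset (w : Circle) : Set Circle := {q | q ≠ 1 ∧ sproj q < sproj w}

lemma closure_Tset (w : Circle) (hw : w ≠ 1) :
    closure (Tset w) ⊆ Tset w ∪ {1, w} := by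
  intro z hz
  by_cases h1 : z = 1
  · exact Or.inr (Or.inl h1)
  by_cases h2 : z = w
  · exact Or.inr (Or.inr h2)
  left
  have himg : sproj z ∈ closure (sproj '' Tset w) :=
    mem_closure_image (continuousAt_sproj h1) hz
  have hsub : sproj '' Tset w ⊆ Set.Iio (sproj w) := by
    rintro _ ⟨q, hq, rfl⟩; exact hq.2
  have hle : sproj z ≤ sproj w := by
    have := closure_mono hsub himg
    rwa [closure_Iio, Set.mem_Iic] at this
  refine ⟨h1, lt_of_le_of_ne hle ?_⟩
  intro he
  exact h2 (sproj_inj h1 hw he)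

lemma not_mem_int_of_tendsto {s : Set Circle} {z : Circle} {g : ℕ → Circle}
    (hg : Filter.Tendsto g Filter.atTop (nhds z))
    (hn : ∀ᶠ n in Filter.atTop, g n ∉ closure s) : z ∉ interior (closure s) := by
  intro hz
  have hev : ∀ᶠ n in Filter.atTop, g n ∈ interior (closure s) :=
    hg.eventually_mem (isOpen_interior.mem_nhds hz)
  obtain ⟨n, hn1, hn2⟩ := (hev.and hn).exists
  exact hn2 (interior_subset hn1)

lemma keyT (w : Circle) (hw : w ≠ 1) : interior (closure (Tset w)) ⊆ Tset w := by
  have hnotT : ∀ t : ℝ, sproj w < t → phi t ∉ closure (Tset w) := by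
    intro t ht hmem
    rcases closure_Tset w hw hmem with h | h | h
    · exact absurd h.2 (not_lt.2 (le_of_lt (by rwa [sproj_phi])))
    · exact phi_ne_one t h
    · rw [← Set.eq_of_mem_singleton h, sproj_phi] at ht
      exact lt_irrefl _ ht
  have h1 : (1 : Circle) ∉ interior (closure (Tset w)) := by
    apply not_mem_int_of_tendsto (g := fun n : ℕ => phi (sproj w + 1 + n))
    · apply tendsto_phi_atTop.comp
      apply Filter.tendsto_atTop_add_const_left
      exact tendsto_natCast_atTop_atTop
    · filter_upwards with n
      exact hnotT _ (by have := Nat.cast_nonneg (α:=ℝ) n; linarith)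
  have h2 : w ∉ interior (closure (Tset w)) := by
    apply not_mem_int_of_tendsto (g := fun n : ℕ => phi (sproj w + 1/(n+1)))
    · have : Filter.Tendsto (fun n : ℕ => sproj w + 1/(n+1 : ℝ)) Filter.atTop (nhds (sproj w + 0)) :=
        tendsto_const_nhds.add tendsto_one_div_add_atTop_nhds_zero_nat
      rw [add_zero] at this
      have := (continuous_phi.tendsto _).comp this
      rwa [phi_sproj hw] at this
    · filter_upwards with n
      apply hnotT
      have : (0:ℝ) < 1/(n+1 : ℝ) := by positivity
      linarith
  intro z hz
  rcases closure_Tset w hw (interior_subset hz) with h | h | h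
  · exact h
  · exact absurd (h ▸ hz) h1
  · exact absurd (h ▸ hz) h2

def oInt' (u v : Circle) : Set Circle :=
  {p | u ≠ p ∧ p ≠ v ∧ v ≠ u ∧ sproj (u⁻¹ * p) < sproj (u⁻¹ * v)}

lemma oInt'_eq_preimage {u v : Circle} (huv : u ≠ v) :
    oInt' u v = (fun p => u⁻¹ * p) ⁻¹' Tset (u⁻¹ * v) := by
  have hw : u⁻¹ * v ≠ 1 := by
    rw [Ne, inv_mul_eq_one]; exact huv
  ext p
  simp only [oInt', Tset, Set.mem_setOf_eq, Set.mem_preimage]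
  constructor
  · rintro ⟨hA, _, _, hD⟩
    exact ⟨by rw [Ne, inv_mul_eq_one]; exact hA, hD⟩
  · rintro ⟨hA, hB⟩
    refine ⟨by rwa [Ne, inv_mul_eq_one] at hA, ?_, huv.symm, hB⟩
    rintro rfl
    exact lt_irrefl _ hB

lemma key_interior_closure {u v : Circle} (huv : u ≠ v) :
    interior (closure (oInt' u v)) ⊆ oInt' u v := by
  have hw : u⁻¹ * v ≠ 1 := by rw [Ne, inv_mul_eq_one]; exact huv
  rw [oInt'_eq_preimage huv]
  have e : Circle ≃ₜ Circle := Homeomorph.mulLeft u⁻¹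
  rw [show (fun p : Circle => u⁻¹ * p) = ⇑(Homeomorph.mulLeft u⁻¹) from rfl]
  rw [← Homeomorph.preimage_closure, ← Homeomorph.preimage_interior]
  exact Set.preimage_mono (keyT _ hw)

end Aux5

end

/-- If `{Iₙ}` is a decreasing sequence in a lamination system `L` with `⋃ₙ Iₙ* = J ∈ L`,
then the interior of `⋂ₙ Iₙ` equals `J*`, and in particular `J* ∈ L`. -/
theorem stmt5 (L : Set (Set Circle)) (hL : LamSys L) (I : ℕ → Set Circle)
    (hmem : ∀ n, I n ∈ L) (hdec : ∀ n, I (n + 1) ⊆ I n) (J : Set Circle) (hJ : J ∈ L)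
    (hU : (⋃ n, dual (I n)) = J) :
    interior (⋂ n, I n) = dual J ∧ dual J ∈ L := by
  refine ⟨?_, hL.dualMem J hJ⟩
  have keyn : ∀ n, interior (closure (I n)) ⊆ I n := by
    intro n
    obtain ⟨u, v, huv, h⟩ := hL.nd _ (hmem n)
    rw [h, show oInt u v = Aux5.oInt' u v from rfl]
    exact Aux5.key_interior_closure huv
  have hJc : Jᶜ = ⋂ n, closure (I n) := by
    rw [← hU, Set.compl_iUnion]
    refine Set.iInter_congr fun n => ?_
    rw [dual, interior_compl, compl_compl]
  have hdual : dual J = interior (⋂ n, closure (I n)) := by rw [dual, hJc]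
  rw [hdual]
  apply subset_antisymm
  · exact interior_mono (Set.iInter_mono fun n => subset_closure)
  · apply interior_maximal _ isOpen_interior
    intro z hz
    rw [Set.mem_iInter]
    intro n
    exact keyn n (interior_mono (Set.iInter_subset _ n) hz)
end

section
/- Let L be a lamination system on S^1. If a sequence of leaves {ℓ_n} of L converges to a nondegenerate open interval J (i.e., there are I_n ∈ L with ℓ_n = ℓ(I_n) and J ⊆ liminf I_n ⊆ limsup I_n ⊆ closure(J)), then J ∈ L. -/
open Set Topology

noncomputable section
namespace CircleArc
open Real

/-- angle from `u` to `p`, in `(0, 2π]`. -/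
def ang (u p : Circle) : ℝ := π + Complex.arg (-((u⁻¹ * p : Circle) : ℂ))

lemma ang_pos (u p : Circle) : 0 < ang u p := by
  have := Complex.neg_pi_lt_arg (-((u⁻¹ * p : Circle) : ℂ))
  unfold ang; linarith

lemma ang_le (u p : Circle) : ang u p ≤ 2 * π := by
  have := Complex.arg_le_pi (-((u⁻¹ * p : Circle) : ℂ))
  unfold ang; linarith

lemma coe_ne_zero (z : Circle) : (z : ℂ) ≠ 0 := by
  intro h
  have := Circle.norm_coe z
  rw [h] at this; simp at this

lemma ang_eq_two_pi_iff (u p : Circle) : ang u p = 2 * π ↔ p = u := by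
  constructor
  · intro h
    have harg : Complex.arg (-((u⁻¹ * p : Circle) : ℂ)) = π := by unfold ang at h; linarith
    rw [Complex.arg_eq_pi_iff] at harg
    obtain ⟨h1, h2⟩ := harg
    have him : ((u⁻¹ * p : Circle) : ℂ).im = 0 := by
      rw [Complex.neg_im] at h2; linarith
    have hre : 0 < ((u⁻¹ * p : Circle) : ℂ).re := by
      simp only [Complex.neg_re] at h1; linarith
    have habs : ‖((u⁻¹ * p : Circle) : ℂ)‖ = 1 := Circle.norm_coe _
    have hone : ((u⁻¹ * p : Circle) : ℂ) = 1 := by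
      have hx : ((u⁻¹ * p : Circle) : ℂ) = (((u⁻¹ * p : Circle) : ℂ).re : ℂ) :=
        Complex.ext (Complex.ofReal_re _).symm (by rw [Complex.ofReal_im, him])
      rw [hx] at habs ⊢
      rw [Complex.norm_real, Real.norm_eq_abs, abs_of_pos hre] at habs
      rw [habs]; norm_num
    have h3 : (u⁻¹ * p : Circle) = 1 := by ext; rw [hone]; simp
    calc p = u * (u⁻¹ * p) := by rw [← mul_assoc, mul_inv_cancel]; simp
    _ = u := by rw [h3, mul_one]
  · intro h
    rw [h]
    have h0 : ((u⁻¹ * u : Circle) : ℂ) = 1 := by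
      rw [inv_mul_cancel]; simp
    unfold ang
    rw [h0]
    rw [show (-1 : ℂ).arg = π from Complex.arg_neg_one]
    ring

lemma ang_lt_two_pi {u p : Circle} (h : p ≠ u) : ang u p < 2 * π :=
  lt_of_le_of_ne (ang_le u p) (fun hh => h ((ang_eq_two_pi_iff u p).mp hh))

lemma mul_exp_ang (u p : Circle) : u * Circle.exp (ang u p) = p := by
  have habs : ‖(-((u⁻¹ * p : Circle) : ℂ))‖ = 1 := by
    rw [norm_neg]; exact Circle.norm_coe _
  have h1 : Complex.exp ((Complex.arg (-((u⁻¹ * p : Circle) : ℂ)) : ℂ) * Complex.I)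
      = -((u⁻¹ * p : Circle) : ℂ) := by
    have := Complex.norm_mul_exp_arg_mul_I (-((u⁻¹ * p : Circle) : ℂ))
    rw [habs] at this; simpa using this
  have h2 : (Circle.exp (ang u p) : ℂ) = ((u⁻¹ * p : Circle) : ℂ) := by
    rw [Circle.coe_exp]
    unfold ang
    push_cast
    rw [add_mul, Complex.exp_add, Complex.exp_pi_mul_I]
    rw [show ((-(((u:ℂ))⁻¹ * (p:ℂ))).arg : ℂ) * Complex.I
        = ((Complex.arg (-((u⁻¹ * p : Circle) : ℂ)) : ℂ) * Complex.I) by push_cast [Circle.coe_mul, Circle.coe_inv]; ring_nf]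
    rw [h1]
    push_cast [Circle.coe_mul, Circle.coe_inv]
    ring
  have h3 : u⁻¹ * p = Circle.exp (ang u p) := by ext; rw [h2]
  rw [← h3, mul_inv_cancel_left]


lemma exp_eq_exp_iff {s t : ℝ} : Circle.exp s = Circle.exp t ↔ ∃ n : ℤ, s = t + n * (2 * π) := by
  constructor
  · intro h
    have : (Circle.exp s : ℂ) = (Circle.exp t : ℂ) := by rw [h]
    rw [Circle.coe_exp, Circle.coe_exp, Complex.exp_eq_exp_iff_exists_int] at this
    obtain ⟨n, hn⟩ := this
    refine ⟨n, ?_⟩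
    have := congrArg Complex.im hn
    simpa using this
  · rintro ⟨n, rfl⟩
    ext
    rw [Circle.coe_exp, Circle.coe_exp, Complex.exp_eq_exp_iff_exists_int]
    exact ⟨n, by push_cast; ring⟩

lemma exp_add (s t : ℝ) : Circle.exp (s + t) = Circle.exp s * Circle.exp t := by
  ext
  rw [Circle.coe_mul, Circle.coe_exp, Circle.coe_exp, Circle.coe_exp, ← Complex.exp_add]
  push_cast; ring_nf


lemma ang_unique {u p : Circle} {s : ℝ} (h1 : 0 < s) (h2 : s ≤ 2 * π)
    (h : u * Circle.exp s = p) : ang u p = s := by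
  have he : Circle.exp (ang u p) = Circle.exp s := by
    have e1 : Circle.exp (ang u p) = u⁻¹ * p := eq_inv_mul_iff_mul_eq.mpr (mul_exp_ang u p)
    have e2 : Circle.exp s = u⁻¹ * p := eq_inv_mul_iff_mul_eq.mpr h
    rw [e1, e2]
  rw [exp_eq_exp_iff] at he
  obtain ⟨n, hn⟩ := he
  have hb1 := ang_pos u p
  have hb2 := ang_le u p
  have hpi := pi_pos
  have hn0 : n = 0 := by
    rcases lt_trichotomy n 0 with h' | h' | h'
    · exfalso
      have : (n : ℝ) ≤ -1 := by exact_mod_cast Int.le_sub_one_of_lt h'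
      nlinarith
    · exact h'
    · exfalso
      have : (1 : ℝ) ≤ (n : ℝ) := by exact_mod_cast h'
      nlinarith
  rw [hn0] at hn; push_cast at hn; linarith

lemma ang_mul_exp {s : ℝ} (u : Circle) (h1 : 0 < s) (h2 : s ≤ 2 * π) :
    ang u (u * Circle.exp s) = s := ang_unique h1 h2 rfl

lemma ang_cocycle (a b c : Circle) :
    ang a b + ang b c = ang a c ∨ ang a b + ang b c = ang a c + 2 * π := by
  have h : a * Circle.exp (ang a b + ang b c) = c := by
    rw [exp_add, ← mul_assoc, mul_exp_ang, mul_exp_ang]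
  have h2 : a * Circle.exp (ang a c) = c := mul_exp_ang a c
  have he : Circle.exp (ang a b + ang b c) = Circle.exp (ang a c) := by
    have e1 : Circle.exp (ang a b + ang b c) = a⁻¹ * c := eq_inv_mul_iff_mul_eq.mpr h
    have e2 : Circle.exp (ang a c) = a⁻¹ * c := eq_inv_mul_iff_mul_eq.mpr h2
    rw [e1, e2]
  rw [exp_eq_exp_iff] at he
  obtain ⟨n, hn⟩ := he
  have b1 := ang_pos a b; have b2 := ang_le a b
  have b3 := ang_pos b c; have b4 := ang_le b c
  have b5 := ang_pos a c; have b6 := ang_le a c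
  have hpi := pi_pos
  have : n = 0 ∨ n = 1 := by
    rcases lt_trichotomy n 0 with h' | h' | h'
    · exfalso
      have : (n : ℝ) ≤ -1 := by exact_mod_cast Int.le_sub_one_of_lt h'
      nlinarith
    · left; exact h'
    · rcases lt_or_ge 1 n with h'' | h''
      · exfalso
        have : (2 : ℝ) ≤ (n : ℝ) := by exact_mod_cast h''
        nlinarith
      · right; omega
  rcases this with rfl | rfl
  · left; push_cast at hn; linarith
  · right; push_cast at hn; linarith

lemma ang_self (u : Circle) : ang u u = 2 * π := (ang_eq_two_pi_iff u u).mpr rfl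

lemma ang_add_rev {a b : Circle} (h : a ≠ b) : ang a b + ang b a = 2 * π := by
  have hba : b ≠ a := h.symm
  rcases ang_cocycle a b a with hc | hc
  · rw [ang_self] at hc; exact hc
  · exfalso
    rw [ang_self] at hc
    have := ang_lt_two_pi hba
    have := ang_lt_two_pi (fun hh : a = b => h hh)
    linarith

lemma ang_eq_iff {a p q : Circle} : ang a p = ang a q ↔ p = q := by
  constructor
  · intro h
    have h1 := mul_exp_ang a p
    have h2 := mul_exp_ang a q
    rw [← h1, ← h2, h]
  · intro h; rw [h]

lemma ang_diff {a p q : Circle} (h : ang a p < ang a q) :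
    ang p q = ang a q - ang a p := by
  rcases ang_cocycle a p q with hc | hc
  · linarith
  · exfalso
    have := ang_le p q
    have := ang_pos a p
    have hq := ang_le a q
    have := ang_pos p q
    have hpi := pi_pos
    linarith


lemma sproj_exp {s : ℝ} (h1 : 0 < s) (h2 : s < 2 * π) :
    sproj (Circle.exp s) = tan (s / 2 - π / 2) := by
  have hre : (Circle.exp s : ℂ).re = cos s := by
    rw [Circle.coe_exp]; exact Complex.exp_ofReal_mul_I_re s
  have him : (Circle.exp s : ℂ).im = sin s := by
    rw [Circle.coe_exp]; exact Complex.exp_ofReal_mul_I_im s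
  have hs : s = 2 * (s / 2) := by ring
  have hsinpos : 0 < sin (s / 2) := sin_pos_of_pos_of_lt_pi (by linarith) (by linarith)
  have hsin : sin s = 2 * sin (s / 2) * cos (s / 2) := by
    nth_rewrite 1 [hs]; rw [sin_two_mul]
  have hcos : cos s = 2 * cos (s / 2) ^ 2 - 1 := by
    nth_rewrite 1 [hs]; rw [cos_two_mul]
  have hpyth : sin (s / 2) ^ 2 + cos (s / 2) ^ 2 = 1 := sin_sq_add_cos_sq _
  unfold sproj
  rw [hre, him, tan_eq_sin_div_cos, sin_sub_pi_div_two, cos_sub_pi_div_two]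
  rw [hsin, hcos]
  rw [div_eq_div_iff (by nlinarith) (by nlinarith)]
  linear_combination (2 * cos (s / 2)) * hpyth

lemma posOri_iff {a b c : Circle} :
    posOri a b c ↔ (a ≠ b ∧ b ≠ c ∧ c ≠ a ∧ ang a b < ang a c) := by
  have key : ∀ p : Circle, p ≠ a → sproj (a⁻¹ * p) = tan (ang a p / 2 - π / 2) := by
    intro p hp
    have e1 : a⁻¹ * p = Circle.exp (ang a p) := (eq_inv_mul_iff_mul_eq.mpr (mul_exp_ang a p)).symm
    rw [e1, sproj_exp (ang_pos a p) (ang_lt_two_pi hp)]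
  constructor
  · rintro ⟨h1, h2, h3, h4⟩
    refine ⟨h1, h2, h3, ?_⟩
    rw [key b (Ne.symm h1), key c h3] at h4
    have m1 : ang a b / 2 - π / 2 ∈ Ioo (-(π/2)) (π/2) := by
      constructor
      · have := ang_pos a b; linarith
      · have := ang_lt_two_pi (Ne.symm h1); linarith
    have m2 : ang a c / 2 - π / 2 ∈ Ioo (-(π/2)) (π/2) := by
      constructor
      · have := ang_pos a c; linarith
      · have := ang_lt_two_pi h3; linarith
    have := (strictMonoOn_tan.lt_iff_lt m1 m2).mp h4
    linarith
  · rintro ⟨h1, h2, h3, h4⟩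
    refine ⟨h1, h2, h3, ?_⟩
    rw [key b (Ne.symm h1), key c h3]
    have m1 : ang a b / 2 - π / 2 ∈ Ioo (-(π/2)) (π/2) := by
      constructor
      · have := ang_pos a b; linarith
      · have := ang_lt_two_pi (Ne.symm h1); linarith
    have m2 : ang a c / 2 - π / 2 ∈ Ioo (-(π/2)) (π/2) := by
      constructor
      · have := ang_pos a c; linarith
      · have := ang_lt_two_pi h3; linarith
    exact strictMonoOn_tan m1 m2 (by linarith)


lemma two_pi_pos : (0:ℝ) < 2 * π := by have := pi_pos; linarith

lemma mem_oInt {a b p : Circle} (hab : a ≠ b) :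
    p ∈ oInt a b ↔ p ≠ a ∧ ang a p < ang a b := by
  constructor
  · intro h
    obtain ⟨h1, h2, h3, h4⟩ := posOri_iff.mp h
    exact ⟨h1.symm, h4⟩
  · rintro ⟨h1, h2⟩
    refine posOri_iff.mpr ⟨h1.symm, ?_, hab.symm, h2⟩
    intro hpb
    rw [hpb] at h2
    exact lt_irrefl _ h2

lemma mem_oInt_ne {a b p : Circle} (h : p ∈ oInt a b) : p ≠ a ∧ p ≠ b := by
  obtain ⟨h1, h2, h3, h4⟩ := posOri_iff.mp h
  exact ⟨h1.symm, h2⟩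

lemma oInt_self (a : Circle) : oInt a a = ∅ := by
  ext p
  simp only [mem_empty_iff_false, iff_false]
  intro h
  exact (posOri_iff.mp h).2.2.1 rfl

lemma oInt_nonempty {a b : Circle} (hab : a ≠ b) : (oInt a b).Nonempty := by
  have hb : b ≠ a := hab.symm
  have h1 : 0 < ang a b / 2 := by have := ang_pos a b; linarith
  have h2 : ang a b / 2 ≤ 2 * π := by have := ang_le a b; linarith
  refine ⟨a * Circle.exp (ang a b / 2), ?_⟩
  rw [mem_oInt hab]
  have he : ang a (a * Circle.exp (ang a b / 2)) = ang a b / 2 := ang_mul_exp a h1 h2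
  constructor
  · intro hh
    rw [hh] at he
    rw [ang_self] at he
    have := ang_lt_two_pi hb
    linarith
  · rw [he]
    have := ang_pos a b
    linarith

lemma mem_oInt_param {a b : Circle} {t : ℝ} (hab : a ≠ b) (h0 : 0 < t) (ht : t < ang a b) :
    a * Circle.exp t ∈ oInt a b := by
  have h2 : t ≤ 2 * π := le_trans (le_of_lt ht) (ang_le a b)
  have he : ang a (a * Circle.exp t) = t := ang_mul_exp a h0 h2
  rw [mem_oInt hab]
  constructor
  · intro hh
    rw [hh, ang_self] at he
    have := ang_le a b
    linarith
  · rw [he]; exact ht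

lemma mem_oInt_or {a b p : Circle} (hab : a ≠ b) (hpa : p ≠ a) (hpb : p ≠ b) :
    p ∈ oInt a b ∨ p ∈ oInt b a := by
  have hne : ang a p ≠ ang a b := fun h => hpb (ang_eq_iff.mp h)
  rcases lt_or_gt_of_ne hne with h | h
  · exact Or.inl ((mem_oInt hab).mpr ⟨hpa, h⟩)
  · right
    rw [mem_oInt hab.symm]
    refine ⟨hpb, ?_⟩
    have hd : ang b p = ang a p - ang a b := ang_diff h
    have hr : ang a b + ang b a = 2 * π := ang_add_rev hab
    have := ang_lt_two_pi hpa
    rw [hd]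
    linarith

lemma oInt_disjoint {a b : Circle} (hab : a ≠ b) : oInt a b ∩ oInt b a = ∅ := by
  ext p
  simp only [mem_inter_iff, mem_empty_iff_false, iff_false, not_and]
  intro h1 h2
  rw [mem_oInt hab] at h1
  rw [mem_oInt hab.symm] at h2
  have hr : ang a b + ang b a = 2 * π := ang_add_rev hab
  have hp1 := ang_pos a p
  have hp2 := ang_pos b p
  rcases ang_cocycle a b p with hc | hc
  · linarith [h1.2, h2.2]
  · linarith [h1.2, h2.2]

lemma continuousAt_ang {a p : Circle} (hpa : p ≠ a) : ContinuousAt (ang a) p := by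
  have hcoe : Continuous (fun q : Circle => -((a⁻¹ * q : Circle) : ℂ)) := by
    have h1 : Continuous (fun q : Circle => a⁻¹ * q) := continuous_const.mul continuous_id
    have h2 : Continuous (fun z : Circle => (z : ℂ)) := continuous_induced_dom
    exact (h2.comp h1).neg
  have hslit : -((a⁻¹ * p : Circle) : ℂ) ∈ Complex.slitPlane := by
    rw [Complex.mem_slitPlane_iff]
    by_contra hh
    push_neg at hh
    obtain ⟨hre, him⟩ := hh
    simp only [Complex.neg_re, Complex.neg_im, neg_eq_zero] at hre him
    have habs : ‖((a⁻¹ * p : Circle) : ℂ)‖ = 1 := Circle.norm_coe _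
    have hre' : ((a⁻¹ * p : Circle) : ℂ).re = 1 := by
      have : ((a⁻¹ * p : Circle) : ℂ) = (((a⁻¹ * p : Circle) : ℂ).re : ℂ) :=
        Complex.ext (Complex.ofReal_re _).symm (by rw [Complex.ofReal_im, him])
      rw [this, Complex.norm_real, Real.norm_eq_abs] at habs
      have h0 : 0 ≤ ((a⁻¹ * p : Circle) : ℂ).re := by linarith
      rw [abs_of_nonneg h0] at habs
      exact habs
    have : ((a⁻¹ * p : Circle) : ℂ) = 1 :=
      Complex.ext (by rw [hre']; simp) (by rw [him]; simp)
    have h3 : (a⁻¹ * p : Circle) = 1 := by ext; rw [this]; simp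
    apply hpa
    calc p = a * (a⁻¹ * p) := by rw [← mul_assoc, mul_inv_cancel, one_mul]
    _ = a := by rw [h3, mul_one]
  have harg : ContinuousAt Complex.arg (-((a⁻¹ * p : Circle) : ℂ)) :=
    Complex.continuousAt_arg hslit
  have hca := ContinuousAt.comp (f := fun q : Circle => -((a⁻¹ * q : Circle) : ℂ))
    (x := p) harg hcoe.continuousAt
  have hca' : ContinuousAt (fun q : Circle => Complex.arg (-((a⁻¹ * q : Circle) : ℂ))) p := hca
  unfold ang
  exact continuousAt_const.add hca' 

lemma oInt_open (a b : Circle) : IsOpen (oInt a b) := by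
  by_cases hab : a = b
  · rw [hab, oInt_self]; exact isOpen_empty
  · rw [isOpen_iff_mem_nhds]
    intro p hp
    rw [mem_oInt hab] at hp
    obtain ⟨hpa, hlt⟩ := hp
    have h1 : {q : Circle | q ≠ a} ∈ 𝓝 p := by
      have : IsOpen {q : Circle | q ≠ a} := isOpen_compl_singleton
      exact this.mem_nhds hpa
    have h2 : (ang a) ⁻¹' (Iio (ang a b)) ∈ 𝓝 p :=
      (continuousAt_ang hpa).preimage_mem_nhds (Iio_mem_nhds hlt)
    filter_upwards [h1, h2] with q hq1 hq2
    exact (mem_oInt hab).mpr ⟨hq1, hq2⟩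

lemma circle_exp_continuous : Continuous (fun t : ℝ => Circle.exp t) := by
  exact Circle.exp.continuous

lemma exp_two_pi : Circle.exp (2 * π) = 1 := by
  have h0 : Circle.exp (0 : ℝ) = 1 := Circle.exp_zero
  rw [← h0]
  rw [exp_eq_exp_iff]
  exact ⟨1, by push_cast; ring⟩

lemma endpoint_mem_closure_left {a b : Circle} (hab : a ≠ b) : a ∈ closure (oInt a b) := by
  have hpos := ang_pos a b
  apply mem_closure_of_tendsto (f := fun n : ℕ => a * Circle.exp (ang a b / (n + 2)))
    (b := Filter.atTop)
  · have ht : Filter.Tendsto (fun n : ℕ => ang a b / ((n : ℝ) + 2)) Filter.atTop (𝓝 0) := by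
      apply Filter.Tendsto.div_atTop tendsto_const_nhds
      apply Filter.tendsto_atTop_add_const_right
      exact tendsto_natCast_atTop_atTop
    have hcm : Continuous (fun t : ℝ => a * Circle.exp t) :=
      continuous_const.mul circle_exp_continuous
    have h2 := hcm.tendsto (0 : ℝ)
    have h3 := Filter.Tendsto.comp h2 ht
    simpa [Circle.exp_zero, Function.comp_def] using h3
  · apply Filter.Eventually.of_forall
    intro n
    apply mem_oInt_param hab
    · positivity
    · apply div_lt_self hpos
      have : (0:ℝ) ≤ (n:ℝ) := Nat.cast_nonneg n
      linarith

lemma endpoint_mem_closure_right {a b : Circle} (hab : a ≠ b) : b ∈ closure (oInt a b) := by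
  have hpos := ang_pos a b
  have hb : a * Circle.exp (ang a b) = b := mul_exp_ang a b
  apply mem_closure_of_tendsto
    (f := fun n : ℕ => a * Circle.exp (ang a b - ang a b / (n + 2))) (b := Filter.atTop)
  · have ht : Filter.Tendsto (fun n : ℕ => ang a b - ang a b / ((n : ℝ) + 2)) Filter.atTop
        (𝓝 (ang a b)) := by
      have h0 : Filter.Tendsto (fun n : ℕ => ang a b / ((n : ℝ) + 2)) Filter.atTop (𝓝 0) := by
        apply Filter.Tendsto.div_atTop tendsto_const_nhds
        apply Filter.tendsto_atTop_add_const_right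
        exact tendsto_natCast_atTop_atTop
      have := (tendsto_const_nhds (x := ang a b) (f := Filter.atTop (α := ℕ))).sub h0
      simpa using this
    have hcm : Continuous (fun t : ℝ => a * Circle.exp t) :=
      continuous_const.mul circle_exp_continuous
    have h2 := hcm.tendsto (ang a b)
    have h3 := Filter.Tendsto.comp h2 ht
    simp only [Function.comp_def] at h3 ⊢
    rw [hb] at h3
    exact h3
  · apply Filter.Eventually.of_forall
    intro n
    have hn2 : (0:ℝ) ≤ (n:ℝ) := Nat.cast_nonneg n
    have hd : 0 < ang a b / ((n:ℝ) + 2) := by positivity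
    have hd2 : ang a b / ((n:ℝ) + 2) < ang a b := by
      apply div_lt_self hpos; linarith
    apply mem_oInt_param hab <;> linarith

lemma closure_oInt {a b : Circle} (hab : a ≠ b) : closure (oInt a b) = (oInt b a)ᶜ := by
  apply Subset.antisymm
  · apply closure_minimal
    · intro p hp
      intro hp2
      have := oInt_disjoint hab
      have : p ∈ oInt a b ∩ oInt b a := ⟨hp, hp2⟩
      rw [oInt_disjoint hab] at this
      exact this
    · exact (oInt_open b a).isClosed_compl
  · intro p hp
    simp only [mem_compl_iff] at hp
    by_cases hpa : p = a
    · rw [hpa]; exact endpoint_mem_closure_left hab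
    by_cases hpb : p = b
    · rw [hpb]; exact endpoint_mem_closure_right hab
    rcases mem_oInt_or hab hpa hpb with h | h
    · exact subset_closure h
    · exact absurd h hp

lemma dual_oInt {a b : Circle} (hab : a ≠ b) : dual (oInt a b) = oInt b a := by
  have hc : (oInt a b)ᶜ = closure (oInt b a) := by
    rw [closure_oInt hab.symm]
  unfold dual
  rw [hc]
  apply Subset.antisymm
  · intro p hp
    have hp' := interior_subset hp
    rw [closure_oInt hab.symm] at hp'
    simp only [mem_compl_iff] at hp'
    by_cases hpb : p = b
    · exfalso
      obtain ⟨O, hOsub, hOopen, hpO⟩ := mem_interior.mp hp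
      have hbc : p ∈ closure (oInt a b) := by
        rw [hpb]; exact endpoint_mem_closure_right hab
      rw [_root_.mem_closure_iff] at hbc
      obtain ⟨q, hq1, hq2⟩ := hbc O hOopen hpO
      have : q ∈ closure (oInt b a) := hOsub hq1
      rw [closure_oInt hab.symm] at this
      exact this hq2
    by_cases hpa : p = a
    · exfalso
      obtain ⟨O, hOsub, hOopen, hpO⟩ := mem_interior.mp hp
      have hbc : p ∈ closure (oInt a b) := by
        rw [hpa]; exact endpoint_mem_closure_left hab
      rw [_root_.mem_closure_iff] at hbc
      obtain ⟨q, hq1, hq2⟩ := hbc O hOopen hpO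
      have : q ∈ closure (oInt b a) := hOsub hq1
      rw [closure_oInt hab.symm] at this
      exact this hq2
    rcases mem_oInt_or hab hpa hpb with h | h
    · exact absurd h hp'
    · exact h
  · rw [← hc]
    intro p hp
    apply mem_interior.mpr
    refine ⟨oInt b a, ?_, oInt_open b a, hp⟩
    intro q hq hq2
    have : q ∈ oInt a b ∩ oInt b a := ⟨hq2, hq⟩
    rw [oInt_disjoint hab] at this
    exact this

lemma interior_closure_oInt {a b : Circle} (hab : a ≠ b) :
    interior (closure (oInt a b)) = oInt a b := by
  rw [closure_oInt hab]
  have : (oInt b a)ᶜ = (oInt b a)ᶜ := rfl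
  have h2 : interior (oInt b a)ᶜ = dual (oInt b a) := rfl
  rw [h2, dual_oInt hab.symm]



lemma oInt_ends_ne {a b : Circle} (hab : a ≠ b) : a ∉ oInt a b ∧ b ∉ oInt a b := by
  constructor
  · intro h; exact (mem_oInt_ne h).1 rfl
  · intro h; exact (mem_oInt_ne h).2 rfl

lemma subarc_aux {a b x y : Circle} (hab : a ≠ b) (hx : x ∈ oInt a b) (hy : y ∈ oInt a b)
    (hlt : ang a x < ang a y) : oInt x y ⊆ oInt a b := by
  intro p hp
  have hxa : x ≠ a := (mem_oInt_ne hx).1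
  have hya : y ≠ a := (mem_oInt_ne hy).1
  have hxy : x ≠ y := fun h => by rw [h] at hlt; exact lt_irrefl _ hlt
  rw [mem_oInt hxy] at hp
  obtain ⟨hpx, hplt⟩ := hp
  have hdy : ang x y = ang a y - ang a x := ang_diff hlt
  have hylt : ang a y < ang a b := (mem_oInt hab).mp hy |>.2
  have hxpos := ang_pos a x
  have hylt2 : ang a y < 2 * π := ang_lt_two_pi hya
  -- p ≠ a
  have hpa : p ≠ a := by
    intro hh
    rw [hh] at hplt
    have : ang x a = 2 * π - ang a x := by
      have := ang_add_rev (a := a) (b := x) (fun h => hxa h.symm)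
      linarith
    rw [this, hdy] at hplt
    linarith
  rcases ang_cocycle a x p with hc | hc
  · rw [mem_oInt hab]
    refine ⟨hpa, ?_⟩
    rw [hdy] at hplt
    linarith
  · exfalso
    have := ang_pos a p
    rw [hdy] at hplt
    linarith

lemma subarc {a b x y : Circle} (hab : a ≠ b) (hx : x ∈ oInt a b) (hy : y ∈ oInt a b)
    (hxy : x ≠ y) : oInt x y ⊆ oInt a b ∨ oInt y x ⊆ oInt a b := by
  have hne : ang a x ≠ ang a y := fun h => hxy (ang_eq_iff.mp h)
  rcases lt_or_gt_of_ne hne with h | h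
  · exact Or.inl (subarc_aux hab hx hy h)
  · exact Or.inr (subarc_aux hab hy hx h)

lemma arc_between {a b x y p₀ : Circle} (hab : a ≠ b) (hxy : x ≠ y)
    (hp0A : p₀ ∈ oInt a b) (hp0 : p₀ ∈ oInt x y)
    (hx : x ∉ oInt a b) (hy : y ∉ oInt a b) : oInt a b ⊆ oInt x y := by
  intro p hp
  by_contra hpn
  have hpx : p ≠ x := fun h => hx (h ▸ hp)
  have hpy : p ≠ y := fun h => hy (h ▸ hp)
  have hpyx : p ∈ oInt y x := (mem_oInt_or hxy hpx hpy).resolve_left hpn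
  have hp0x : p₀ ≠ x := (mem_oInt_ne hp0).1
  have hp0y : p₀ ≠ y := (mem_oInt_ne hp0).2
  have hpp0 : p ≠ p₀ := fun h => hpn (h ▸ hp0)
  -- coordinates in chart at x
  have hs0y : ang x p₀ < ang x y := ((mem_oInt hxy).mp hp0).2
  have hsp : ang x y < ang x p := by
    have h1 : ang y p < ang y x := ((mem_oInt hxy.symm).mp hpyx).2
    have h2 : ang x y + ang y x = 2 * π := ang_add_rev hxy
    rcases ang_cocycle x y p with hc | hc
    · have := ang_pos y p
      linarith
    · exfalso
      have := ang_pos x p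
      linarith
  -- y ∈ oInt p₀ p
  have hymem : y ∈ oInt p₀ p := by
    rw [mem_oInt hpp0.symm]
    refine ⟨fun h => hp0y h.symm, ?_⟩
    have e1 : ang p₀ y = ang x y - ang x p₀ := ang_diff hs0y
    have e2 : ang p₀ p = ang x p - ang x p₀ := ang_diff (lt_trans hs0y hsp)
    rw [e1, e2]
    linarith
  -- x ∈ oInt p p₀
  have hxmem : x ∈ oInt p p₀ := by
    rw [mem_oInt hpp0]
    refine ⟨fun h => hpx h.symm, ?_⟩
    have e1 : ang p x = 2 * π - ang x p := by
      have := ang_add_rev (a := x) (b := p) (fun h => hpx h.symm)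
      linarith
    have e2 : ang p p₀ = 2 * π - ang x p + ang x p₀ := by
      rcases ang_cocycle p x p₀ with hc | hc
      · rw [e1] at hc; linarith
      · exfalso
        rw [e1] at hc
        have h1 := ang_lt_two_pi (u := x) (show p₀ ≠ x from hp0x)
        have h2 := ang_pos p p₀
        have h3 := ang_pos x p₀
        linarith
    rw [e1, e2]
    have := ang_pos x p₀
    linarith
  rcases subarc hab hp0A hp hpp0.symm with hs | hs
  · exact hy (hs hymem)
  · exact hx (hs hxmem)

lemma chart_ang {u : Circle} {x y : ℝ} (h1 : 0 < y - x) (h2 : y - x ≤ 2 * π) :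
    ang (u * Circle.exp x) (u * Circle.exp y) = y - x := by
  apply ang_unique h1 h2
  rw [mul_assoc, ← exp_add]
  congr 1
  ring_nf

lemma chart_ang' {u : Circle} {x y : ℝ} (h1 : y - x ≤ 0) (h2 : 0 < y - x + 2 * π) :
    ang (u * Circle.exp x) (u * Circle.exp y) = y - x + 2 * π := by
  apply ang_unique h2 (by linarith)
  rw [mul_assoc, ← exp_add]
  have : x + (y - x + 2 * π) = y + 2 * π := by ring
  rw [this, exp_add, exp_two_pi, mul_one]

lemma chart_ne {u : Circle} {x y : ℝ} (hx : 0 < x) (hy : y ≤ 2 * π) (hxy : x < y) :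
    u * Circle.exp x ≠ u * Circle.exp y := by
  intro h
  have h1 : ang u (u * Circle.exp x) = x := ang_mul_exp u hx (by linarith)
  have h2 : ang u (u * Circle.exp y) = y := ang_mul_exp u (by linarith) hy
  rw [h] at h1
  rw [h1] at h2
  linarith


open scoped Classical in
/-- prefix-maximum of a sequence of sets -/
noncomputable def pmax (g : ℕ → Set Circle) : ℕ → Set Circle
  | 0 => g 0
  | (k+1) => if g (k+1) ⊆ pmax g k then pmax g k else g (k+1)

lemma pmax_exists (g : ℕ → Set Circle) (k : ℕ) : ∃ i, pmax g k = g i := by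
  induction k with
  | zero => exact ⟨0, rfl⟩
  | succ k ih =>
    rw [pmax]
    split
    · exact ih
    · exact ⟨k+1, rfl⟩

lemma pmax_ge (g : ℕ → Set Circle) (k : ℕ) : g k ⊆ pmax g k := by
  cases k with
  | zero => exact subset_rfl
  | succ k =>
    rw [pmax]
    split
    · assumption
    · exact subset_rfl

lemma pmax_mono (g : ℕ → Set Circle) (hcomp : ∀ i j, g i ⊆ g j ∨ g j ⊆ g i) (k : ℕ) :
    pmax g k ⊆ pmax g (k+1) := by
  rw [pmax]
  split
  · exact subset_rfl
  · next h =>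
    obtain ⟨i, hi⟩ := pmax_exists g k
    rw [hi]
    rcases hcomp i (k+1) with h' | h'
    · exact h'
    · exfalso; rw [hi] at h; exact h h'

lemma mem_L_isOpen {L : Set (Set Circle)} (hL : LamSys L) {A : Set Circle} (hA : A ∈ L) :
    IsOpen A := by
  obtain ⟨a, b, hab, rfl⟩ := hL.nd A hA
  exact oInt_open a b

lemma dual_anti {A B : Set Circle} (h : A ⊆ B) : dual B ⊆ dual A :=
  interior_mono (compl_subset_compl.mpr h)

lemma dual_dual_mem {L : Set (Set Circle)} (hL : LamSys L) {A : Set Circle} (hA : A ∈ L) :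
    dual (dual A) = A := by
  obtain ⟨a, b, hab, rfl⟩ := hL.nd A hA
  rw [dual_oInt hab, dual_oInt hab.symm]

lemma dual_subset_compl (A : Set Circle) : dual A ⊆ Aᶜ := interior_subset

/-- one-sided union lemma -/
lemma oneSided {L : Set (Set Circle)} (hL : LamSys L) {a b : Circle} (hab : a ≠ b)
    (g : ℕ → Set Circle) (hmem : ∀ k, g k ∈ L) (hsub : ∀ k, g k ⊆ closure (oInt a b))
    (hcov : ∀ p ∈ oInt a b, ∃ k, p ∈ g k)
    (hcomp : ∀ i j, g i ⊆ g j ∨ g j ⊆ g i) : oInt a b ∈ L := by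
  have hU : (⋃ k, pmax g k) = oInt a b := by
    apply Subset.antisymm
    · have hUopen : IsOpen (⋃ k, pmax g k) := by
        apply isOpen_iUnion
        intro k
        obtain ⟨i, hi⟩ := pmax_exists g k
        rw [hi]
        exact mem_L_isOpen hL (hmem i)
      have hUsub : (⋃ k, pmax g k) ⊆ closure (oInt a b) := by
        apply iUnion_subset
        intro k
        obtain ⟨i, hi⟩ := pmax_exists g k
        rw [hi]
        exact hsub i
      have := interior_maximal hUsub hUopen
      rwa [interior_closure_oInt hab] at this
    · intro p hp
      obtain ⟨k, hk⟩ := hcov p hp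
      exact mem_iUnion.mpr ⟨k, pmax_ge g k hk⟩
  have := hL.chainUnion (pmax g) (fun k => by
      obtain ⟨i, hi⟩ := pmax_exists g k
      rw [hi]; exact hmem i)
    (pmax_mono g hcomp) (by rw [hU]; exact ⟨a, b, hab, rfl⟩)
  rwa [hU] at this

/-- pairwise comparability from unlinkedness -/
lemma pair_comp {L : Set (Set Circle)} (hL : LamSys L) {A B : Set Circle}
    (hA : A ∈ L) (hB : B ∈ L) (hint : (A ∩ B).Nonempty)
    (hx : ∃ x, x ∈ dual A ∧ x ∉ B) : A ⊆ B ∨ B ⊆ A := by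
  obtain ⟨q, hqA, hqB⟩ := hint
  obtain ⟨x, hxd, hxB⟩ := hx
  rcases hL.unlinked A hA B hB with h | h
  · rcases h with h | h
    · exact Or.inl h
    · exact absurd (h hxd) hxB
  · rcases h with h | h
    · exfalso
      exact (dual_subset_compl B) (h hqA) hqB
    · right
      have := dual_anti h
      rwa [dual_dual_mem hL hA, dual_dual_mem hL hB] at this

lemma main_conv {L : Set (Set Circle)} (hL : LamSys L) (I : ℕ → Set Circle)
    (hIL : ∀ n, I n ∈ L) {u v : Circle} (huv : u ≠ v)
    (hconv : ConvTo I (oInt u v)) : oInt u v ∈ L := by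
  have hvu : v ≠ u := huv.symm
  have hs0 : 0 < ang u v := ang_pos u v
  have hs2 : ang u v < 2 * π := ang_lt_two_pi hvu
  have hpi := Real.pi_pos
  -- eventual membership/exclusion
  have hLim : ∀ p ∈ oInt u v, ∃ N, ∀ n, N ≤ n → p ∈ I n := by
    intro p hp
    have h1 := hconv.1 hp
    simp only [sLiminf, mem_iUnion, mem_iInter] at h1
    obtain ⟨k, hk⟩ := h1
    exact ⟨k, fun n hn => hk n hn⟩
  have hLs : ∀ p : Circle, p ∉ closure (oInt u v) → ∃ N, ∀ n, N ≤ n → p ∉ I n := by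
    intro p hp
    by_contra hcon
    push_neg at hcon
    apply hp
    apply hconv.2.2
    simp only [sLimsup, mem_iInter, mem_iUnion]
    intro k
    obtain ⟨n, hn, hpn⟩ := hcon k
    exact ⟨n, hn, hpn⟩
  have hclosJ : closure (oInt u v) = (oInt v u)ᶜ := closure_oInt huv
  have hclosJs : closure (oInt v u) = (oInt u v)ᶜ := closure_oInt hvu
  have hnotclos : ∀ p ∈ oInt v u, p ∉ closure (oInt u v) := by
    intro p hp
    rw [hclosJ]
    exact fun h => h hp
  have hv : u * Circle.exp (ang u v) = v := mul_exp_ang u v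
  have hu2 : u * Circle.exp (2 * π) = u := by rw [exp_two_pi, mul_one]
  have hangvu : ang v u = 2 * π - ang u v := by
    have := ang_add_rev huv
    linarith
  -- fraction bounds
  have hfrac : ∀ aa : ℝ, 0 < aa → ∀ k : ℕ, 0 < aa / ((k:ℝ)+3) ∧ aa / ((k:ℝ)+3) ≤ aa / 3 := by
    intro aa ha k
    have hk : (0:ℝ) ≤ (k:ℝ) := Nat.cast_nonneg k
    constructor
    · positivity
    · rw [div_le_div_iff₀ (by linarith) (by norm_num)]
      nlinarith
  have harch : ∀ aa m : ℝ, 0 < aa → 0 < m → ∃ k : ℕ, aa / ((k:ℝ)+3) < m := by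
    intro aa m ha hm
    obtain ⟨k, hk⟩ := exists_nat_gt (aa / m)
    refine ⟨k, ?_⟩
    have hk0 : (0:ℝ) ≤ (k:ℝ) := Nat.cast_nonneg k
    rw [div_lt_iff₀ (by linarith)]
    rw [div_lt_iff₀ hm] at hk
    nlinarith
  -- bounds for δ k and ε k
  have hδ := hfrac (ang u v) hs0
  have hε := hfrac (2*π - ang u v) (by linarith)
  -- point membership facts
  have hp0J : u * Circle.exp (ang u v / 2) ∈ oInt u v :=
    mem_oInt_param huv (by linarith) (by linarith)
  have huk : ∀ k : ℕ, u * Circle.exp (ang u v / ((k:ℝ)+3)) ∈ oInt u v := by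
    intro k
    exact mem_oInt_param huv (hδ k).1 (by nlinarith [(hδ k).1, (hδ k).2])
  have hvk : ∀ k : ℕ, u * Circle.exp (ang u v - ang u v / ((k:ℝ)+3)) ∈ oInt u v := by
    intro k
    exact mem_oInt_param huv (by nlinarith [(hδ k).1, (hδ k).2]) (by linarith [(hδ k).1])
  have hukvk : ∀ k : ℕ, u * Circle.exp (ang u v / ((k:ℝ)+3))
      ≠ u * Circle.exp (ang u v - ang u v / ((k:ℝ)+3)) := by
    intro k
    exact chart_ne (hδ k).1 (by linarith [(hδ k).1]) (by nlinarith [(hδ k).1, (hδ k).2])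
  -- mb ∈ oInt v u
  have hmbout : u * Circle.exp ((ang u v + 2*π)/2) ∈ oInt v u := by
    have h1 : ang v (u * Circle.exp ((ang u v + 2*π)/2)) = (2*π - ang u v)/2 := by
      have := chart_ang (u := u) (x := ang u v) (y := (ang u v + 2*π)/2)
        (by linarith) (by linarith)
      rw [hv] at this
      rw [this]; ring
    have h2 : u * Circle.exp (ang u v) ≠ u * Circle.exp ((ang u v + 2*π)/2) :=
      chart_ne (by linarith) (by linarith) (by linarith)
    rw [hv] at h2
    rw [mem_oInt hvu]
    exact ⟨h2.symm, by rw [h1, hangvu]; linarith⟩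
  -- mb ∈ oInt (vk k) (uk k)
  have hmbin : ∀ k : ℕ, u * Circle.exp ((ang u v + 2*π)/2) ∈
      oInt (u * Circle.exp (ang u v - ang u v / ((k:ℝ)+3)))
           (u * Circle.exp (ang u v / ((k:ℝ)+3))) := by
    intro k
    obtain ⟨hd1, hd2⟩ := hδ k
    have h1 : ang (u * Circle.exp (ang u v - ang u v / ((k:ℝ)+3)))
        (u * Circle.exp ((ang u v + 2*π)/2)) = (2*π - ang u v)/2 + ang u v / ((k:ℝ)+3) := by
      have := chart_ang (u := u) (x := ang u v - ang u v / ((k:ℝ)+3))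
        (y := (ang u v + 2*π)/2) (by linarith) (by linarith)
      rw [this]; ring
    have h2 : ang (u * Circle.exp (ang u v - ang u v / ((k:ℝ)+3)))
        (u * Circle.exp (ang u v / ((k:ℝ)+3)))
        = 2 * ( ang u v / ((k:ℝ)+3)) - ang u v + 2*π := by
      have := chart_ang' (u := u) (x := ang u v - ang u v / ((k:ℝ)+3))
        (y := ang u v / ((k:ℝ)+3)) (by nlinarith) (by nlinarith)
      rw [this]; ring
    have hne : u * Circle.exp (ang u v - ang u v / ((k:ℝ)+3))
        ≠ u * Circle.exp ((ang u v + 2*π)/2) :=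
      chart_ne (by nlinarith) (by linarith) (by nlinarith)
    rw [mem_oInt (hukvk k).symm]
    exact ⟨hne.symm, by rw [h1, h2]; nlinarith⟩
  -- dk, ek ∈ oInt v u
  have hdkout : ∀ k : ℕ, u * Circle.exp (2*π - (2*π - ang u v) / ((k:ℝ)+3)) ∈ oInt v u := by
    intro k
    obtain ⟨he1, he2⟩ := hε k
    have h1 : ang v (u * Circle.exp (2*π - (2*π - ang u v) / ((k:ℝ)+3)))
        = 2*π - (2*π - ang u v) / ((k:ℝ)+3) - ang u v := by
      have := chart_ang (u := u) (x := ang u v) (y := 2*π - (2*π - ang u v) / ((k:ℝ)+3))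
        (by nlinarith) (by nlinarith)
      rw [hv] at this
      rw [this]
    have h2 : u * Circle.exp (ang u v) ≠ u * Circle.exp (2*π - (2*π - ang u v) / ((k:ℝ)+3)) :=
      chart_ne (by linarith) (by nlinarith) (by nlinarith)
    rw [hv] at h2
    rw [mem_oInt hvu]
    exact ⟨h2.symm, by rw [h1, hangvu]; nlinarith⟩
  have hekout : ∀ k : ℕ, u * Circle.exp (ang u v + (2*π - ang u v) / ((k:ℝ)+3)) ∈ oInt v u := by
    intro k
    obtain ⟨he1, he2⟩ := hε k
    have h1 : ang v (u * Circle.exp (ang u v + (2*π - ang u v) / ((k:ℝ)+3)))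
        = (2*π - ang u v) / ((k:ℝ)+3) := by
      have := chart_ang (u := u) (x := ang u v) (y := ang u v + (2*π - ang u v) / ((k:ℝ)+3))
        (by nlinarith) (by nlinarith)
      rw [hv] at this
      rw [this]; ring
    have h2 : u * Circle.exp (ang u v) ≠ u * Circle.exp (ang u v + (2*π - ang u v) / ((k:ℝ)+3)) :=
      chart_ne (by linarith) (by nlinarith) (by nlinarith)
    rw [hv] at h2
    rw [mem_oInt hvu]
    exact ⟨h2.symm, by rw [h1, hangvu]; nlinarith⟩
  -- ek ≠ dk
  have hekdk : ∀ k : ℕ, u * Circle.exp (ang u v + (2*π - ang u v) / ((k:ℝ)+3))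
      ≠ u * Circle.exp (2*π - (2*π - ang u v) / ((k:ℝ)+3)) := by
    intro k
    obtain ⟨he1, he2⟩ := hε k
    exact chart_ne (by nlinarith) (by nlinarith) (by nlinarith)
  -- p0 ∈ oInt (dk k) (ek k)
  have hp0out : ∀ k : ℕ, u * Circle.exp (ang u v / 2) ∈
      oInt (u * Circle.exp (2*π - (2*π - ang u v) / ((k:ℝ)+3)))
           (u * Circle.exp (ang u v + (2*π - ang u v) / ((k:ℝ)+3))) := by
    intro k
    obtain ⟨he1, he2⟩ := hε k
    have h1 : ang (u * Circle.exp (2*π - (2*π - ang u v) / ((k:ℝ)+3)))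
        (u * Circle.exp (ang u v / 2)) = ang u v / 2 + (2*π - ang u v) / ((k:ℝ)+3) := by
      have := chart_ang' (u := u) (x := 2*π - (2*π - ang u v) / ((k:ℝ)+3))
        (y := ang u v / 2) (by nlinarith) (by nlinarith)
      rw [this]; ring
    have h2 : ang (u * Circle.exp (2*π - (2*π - ang u v) / ((k:ℝ)+3)))
        (u * Circle.exp (ang u v + (2*π - ang u v) / ((k:ℝ)+3)))
        = ang u v + 2 * ((2*π - ang u v) / ((k:ℝ)+3)) := by
      have := chart_ang' (u := u) (x := 2*π - (2*π - ang u v) / ((k:ℝ)+3))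
        (y := ang u v + (2*π - ang u v) / ((k:ℝ)+3)) (by nlinarith) (by nlinarith)
      rw [this]; ring
    have hne : u * Circle.exp (ang u v / 2)
        ≠ u * Circle.exp (2*π - (2*π - ang u v) / ((k:ℝ)+3)) :=
      chart_ne (by linarith) (by nlinarith) (by nlinarith)
    rw [mem_oInt (hekdk k).symm]
    exact ⟨hne, by rw [h1, h2]; nlinarith⟩
  -- coverage of J by the arcs (uk k, vk k)
  have hcovJ : ∀ p ∈ oInt u v, ∃ k : ℕ, p ∈
      oInt (u * Circle.exp (ang u v / ((k:ℝ)+3)))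
           (u * Circle.exp (ang u v - ang u v / ((k:ℝ)+3))) := by
    intro p hp
    obtain ⟨hpu, hpt⟩ := (mem_oInt huv).mp hp
    have ht0 : 0 < ang u p := ang_pos u p
    have hrep : u * Circle.exp (ang u p) = p := mul_exp_ang u p
    obtain ⟨k, hk⟩ := harch (ang u v) (min (ang u p) (ang u v - ang u p)) hs0
      (by simp only [lt_min_iff]; exact ⟨ht0, by linarith⟩)
    rw [lt_min_iff] at hk
    obtain ⟨hk1, hk2⟩ := hk
    obtain ⟨hd1, hd2⟩ := hδ k
    refine ⟨k, ?_⟩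
    rw [mem_oInt (hukvk k)]
    constructor
    · have := chart_ne (u := u) (x := ang u v / ((k:ℝ)+3)) (y := ang u p)
        hd1 (by linarith [ang_le u p]) hk1
      rw [hrep] at this
      exact this.symm
    · have e1 : ang (u * Circle.exp (ang u v / ((k:ℝ)+3))) p
          = ang u p - ang u v / ((k:ℝ)+3) := by
        have := chart_ang (u := u) (x := ang u v / ((k:ℝ)+3)) (y := ang u p)
          (by linarith) (by linarith [ang_le u p])
        rw [hrep] at this
        rw [this]
      have e2 : ang (u * Circle.exp (ang u v / ((k:ℝ)+3)))
          (u * Circle.exp (ang u v - ang u v / ((k:ℝ)+3)))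
          = ang u v - 2 * (ang u v / ((k:ℝ)+3)) := by
        have := chart_ang (u := u) (x := ang u v / ((k:ℝ)+3))
          (y := ang u v - ang u v / ((k:ℝ)+3)) (by nlinarith) (by linarith)
        rw [this]; ring
      rw [e1, e2]
      linarith
  -- coverage of J* by the arcs (ek k, dk k)
  have hcovJs : ∀ p ∈ oInt v u, ∃ k : ℕ, p ∈
      oInt (u * Circle.exp (ang u v + (2*π - ang u v) / ((k:ℝ)+3)))
           (u * Circle.exp (2*π - (2*π - ang u v) / ((k:ℝ)+3))) := by
    intro p hp
    obtain ⟨hpv, hpr⟩ := (mem_oInt hvu).mp hp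
    rw [hangvu] at hpr
    have hr0 : 0 < ang v p := ang_pos v p
    have ht : ang u p = ang u v + ang v p := by
      rcases ang_cocycle u v p with hc | hc
      · linarith
      · exfalso
        have := ang_pos u p
        linarith
    have htb : ang u v < ang u p ∧ ang u p < 2*π := ⟨by linarith, by linarith⟩
    have hrep : u * Circle.exp (ang u p) = p := mul_exp_ang u p
    obtain ⟨k, hk⟩ := harch (2*π - ang u v) (min (ang u p - ang u v) (2*π - ang u p))
      (by linarith) (by simp only [lt_min_iff]; exact ⟨by linarith, by linarith⟩)
    rw [lt_min_iff] at hk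
    obtain ⟨hk1, hk2⟩ := hk
    obtain ⟨he1, he2⟩ := hε k
    refine ⟨k, ?_⟩
    rw [mem_oInt (hekdk k)]
    constructor
    · have := chart_ne (u := u) (x := ang u v + (2*π - ang u v) / ((k:ℝ)+3)) (y := ang u p)
        (by linarith) (by linarith) (by linarith)
      rw [hrep] at this
      exact this.symm
    · have e1 : ang (u * Circle.exp (ang u v + (2*π - ang u v) / ((k:ℝ)+3))) p
          = ang u p - ang u v - (2*π - ang u v) / ((k:ℝ)+3) := by
        have := chart_ang (u := u) (x := ang u v + (2*π - ang u v) / ((k:ℝ)+3))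
          (y := ang u p) (by linarith) (by linarith)
        rw [hrep] at this
        rw [this]; ring
      have e2 : ang (u * Circle.exp (ang u v + (2*π - ang u v) / ((k:ℝ)+3)))
          (u * Circle.exp (2*π - (2*π - ang u v) / ((k:ℝ)+3)))
          = 2*π - ang u v - 2 * ((2*π - ang u v) / ((k:ℝ)+3)) := by
        have := chart_ang (u := u) (x := ang u v + (2*π - ang u v) / ((k:ℝ)+3))
          (y := 2*π - (2*π - ang u v) / ((k:ℝ)+3)) (by nlinarith) (by nlinarith)
        rw [this]; ring
      rw [e1, e2]
      linarith
  -- eventually Jin_k ⊆ I n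
  have hJinIn : ∀ k : ℕ, ∃ N, ∀ n, N ≤ n →
      oInt (u * Circle.exp (ang u v / ((k:ℝ)+3)))
           (u * Circle.exp (ang u v - ang u v / ((k:ℝ)+3))) ⊆ I n := by
    intro k
    obtain ⟨N1, hN1⟩ := hLim _ (huk k)
    obtain ⟨N2, hN2⟩ := hLim _ (hvk k)
    obtain ⟨N3, hN3⟩ := hLs _ (hnotclos _ hmbout)
    refine ⟨max (max N1 N2) N3, ?_⟩
    intro n hn
    have hn1 : N1 ≤ n := le_trans (le_trans (le_max_left _ _) (le_max_left _ _)) hn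
    have hn2 : N2 ≤ n := le_trans (le_trans (le_max_right _ _) (le_max_left _ _)) hn
    have hn3 : N3 ≤ n := le_trans (le_max_right _ _) hn
    obtain ⟨a, b, hab, hIn⟩ := hL.nd (I n) (hIL n)
    have h1 : u * Circle.exp (ang u v / ((k:ℝ)+3)) ∈ oInt a b := by
      rw [← hIn]; exact hN1 n hn1
    have h2 : u * Circle.exp (ang u v - ang u v / ((k:ℝ)+3)) ∈ oInt a b := by
      rw [← hIn]; exact hN2 n hn2
    rcases subarc hab h1 h2 (hukvk k) with hs | hs
    · rw [hIn]; exact hs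
    · exfalso
      apply hN3 n hn3
      rw [hIn]
      exact hs (hmbin k)
  -- eventually I n ⊆ Jout_k
  have hJoutIn : ∀ k : ℕ, ∃ N, ∀ n, N ≤ n →
      I n ⊆ oInt (u * Circle.exp (2*π - (2*π - ang u v) / ((k:ℝ)+3)))
                 (u * Circle.exp (ang u v + (2*π - ang u v) / ((k:ℝ)+3))) := by
    intro k
    obtain ⟨N1, hN1⟩ := hLim _ hp0J
    obtain ⟨N2, hN2⟩ := hLs _ (hnotclos _ (hdkout k))
    obtain ⟨N3, hN3⟩ := hLs _ (hnotclos _ (hekout k))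
    refine ⟨max (max N1 N2) N3, ?_⟩
    intro n hn
    have hn1 : N1 ≤ n := le_trans (le_trans (le_max_left _ _) (le_max_left _ _)) hn
    have hn2 : N2 ≤ n := le_trans (le_trans (le_max_right _ _) (le_max_left _ _)) hn
    have hn3 : N3 ≤ n := le_trans (le_max_right _ _) hn
    obtain ⟨a, b, hab, hIn⟩ := hL.nd (I n) (hIL n)
    have h1 : u * Circle.exp (ang u v / 2) ∈ oInt a b := by
      rw [← hIn]; exact hN1 n hn1
    have h2 : u * Circle.exp (2*π - (2*π - ang u v) / ((k:ℝ)+3)) ∉ oInt a b := by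
      rw [← hIn]; exact hN2 n hn2
    have h3 : u * Circle.exp (ang u v + (2*π - ang u v) / ((k:ℝ)+3)) ∉ oInt a b := by
      rw [← hIn]; exact hN3 n hn3
    rw [hIn]
    exact arc_between hab (hekdk k).symm h1 (hp0out k) h2 h3
  -- pairwise comparability of the tail
  obtain ⟨Na, hNa⟩ := hLim _ hp0J
  obtain ⟨Nb, hNb⟩ := hJoutIn 1
  obtain ⟨x1, hx1⟩ := oInt_nonempty (hekdk 1)
  have hcmp : ∀ n m, max Na Nb ≤ n → max Na Nb ≤ m → I n ⊆ I m ∨ I m ⊆ I n := by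
    intro n m hn hm
    apply pair_comp hL (hIL n) (hIL m)
    · exact ⟨u * Circle.exp (ang u v / 2),
        hNa n (le_trans (le_max_left _ _) hn), hNa m (le_trans (le_max_left _ _) hm)⟩
    · refine ⟨x1, ?_, ?_⟩
      · have hsub := hNb n (le_trans (le_max_right _ _) hn)
        have hd := dual_anti hsub
        rw [dual_oInt (hekdk 1).symm] at hd
        exact hd hx1
      · intro hx1m
        have hm2 := hNb m (le_trans (le_max_right _ _) hm) hx1m
        have hmem : x1 ∈ oInt (u * Circle.exp (ang u v + (2*π - ang u v) / (((1:ℕ):ℝ)+3)))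
            (u * Circle.exp (2*π - (2*π - ang u v) / (((1:ℕ):ℝ)+3))) ∩
            oInt (u * Circle.exp (2*π - (2*π - ang u v) / (((1:ℕ):ℝ)+3)))
            (u * Circle.exp (ang u v + (2*π - ang u v) / (((1:ℕ):ℝ)+3))) := ⟨hx1, hm2⟩
        rw [oInt_disjoint (hekdk 1)] at hmem
        exact hmem
  set NN := max Na Nb with hNN
  -- case analysis
  by_cases hα : ∀ K : ℕ, ∃ n, K ≤ n ∧ I n ⊆ closure (oInt u v)
  · -- inner case: apply the one-sided lemma directly
    choose nsel hn1 hn2 using hα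
    apply oneSided hL huv (fun k => I (nsel (max ((hJinIn k).choose) NN)))
    · intro k; exact hIL _
    · intro k; exact hn2 _
    · intro p hp
      obtain ⟨k, hk⟩ := hcovJ p hp
      refine ⟨k, ?_⟩
      apply (hJinIn k).choose_spec (nsel (max ((hJinIn k).choose) NN))
        (le_trans (le_max_left _ _) (hn1 _))
      exact hk
    · intro i j
      apply hcmp
      · exact le_trans (le_max_right _ _) (hn1 _)
      · exact le_trans (le_max_right _ _) (hn1 _)
  by_cases hβ : ∀ K : ℕ, ∃ n, K ≤ n ∧ dual (I n) ∩ oInt u v = ∅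
  · -- outer case: apply the one-sided lemma to the duals, then dualize
    choose nsel hn1 hn2 using hβ
    have hJs : oInt v u ∈ L := by
      apply oneSided hL hvu (fun k => dual (I (nsel (max ((hJoutIn k).choose) NN))))
      · intro k; exact hL.dualMem _ (hIL _)
      · intro k
        rw [hclosJs]
        intro p hp hpJ
        have : p ∈ dual (I (nsel (max ((hJoutIn k).choose) NN))) ∩ oInt u v := ⟨hp, hpJ⟩
        rw [hn2 _] at this
        exact this
      · intro p hp
        obtain ⟨k, hk⟩ := hcovJs p hp
        refine ⟨k, ?_⟩
        have hsub := (hJoutIn k).choose_spec (nsel (max ((hJoutIn k).choose) NN))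
          (le_trans (le_max_left _ _) (hn1 _))
        have hd := dual_anti hsub
        rw [dual_oInt (hekdk k).symm] at hd
        exact hd hk
      · intro i j
        rcases hcmp (nsel (max ((hJoutIn i).choose) NN)) (nsel (max ((hJoutIn j).choose) NN))
          (le_trans (le_max_right _ _) (hn1 _)) (le_trans (le_max_right _ _) (hn1 _)) with h | h
        · exact Or.inr (dual_anti h)
        · exact Or.inl (dual_anti h)
    have := hL.dualMem _ hJs
    rwa [dual_oInt hvu] at this
  · -- contradiction case
    exfalso
    push_neg at hα hβ
    obtain ⟨A, hA⟩ := hα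
    obtain ⟨B, hB⟩ := hβ
    set n0 := max (max A B) NN with hn0
    have hxE : ∃ x, x ∈ I n0 ∧ x ∉ closure (oInt u v) := by
      have h1 := hA n0 (le_trans (le_max_left _ _) (le_max_left _ _))
      rw [not_subset] at h1
      obtain ⟨x, hx1, hx2⟩ := h1
      exact ⟨x, hx1, hx2⟩
    obtain ⟨x, hxI, hxc⟩ := hxE
    have hqE : (dual (I n0) ∩ oInt u v).Nonempty :=
      hB n0 (le_trans (le_max_right _ _) (le_max_left _ _))
    obtain ⟨q, hqd, hqJ⟩ := hqE
    have hqI : q ∉ I n0 := fun h => (dual_subset_compl (I n0)) hqd h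
    obtain ⟨Cq, hCq⟩ := hLim q hqJ
    obtain ⟨Dx, hDx⟩ := hLs x hxc
    set m := max (max Cq Dx) NN with hm
    rcases hcmp n0 m (le_max_right _ _) (le_max_right _ _) with h | h
    · exact hDx m (le_trans (le_max_right _ _) (le_max_left _ _)) (h hxI)
    · exact hqI (h (hCq m (le_trans (le_max_left _ _) (le_max_left _ _))))

end CircleArc
end

/-- If a sequence of leaves of a lamination system `L` converges to a nondegenerate
open interval `J`, then `J ∈ L`. -/
theorem stmt6 (L : Set (Set Circle)) (hL : LamSys L) (ℓ : ℕ → Set (Set Circle))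
    (J : Set Circle) (hJ : IsND J)
    (hconv : ∃ I : ℕ → Set Circle, (∀ n, I n ∈ L) ∧ (∀ n, ℓ n = leafOf (I n)) ∧ ConvTo I J) :
    J ∈ L := by
  obtain ⟨I, hIL, hleaf, hconv2⟩ := hconv
  obtain ⟨u, v, huv, rfl⟩ := hJ
  exact CircleArc.main_conv hL I hIL huv hconv2
end

section
/- Let L be a lamination system on S^1, I a nondegenerate open interval, and x ∈ I with C_x^I nonempty. Then there exists an increasing sequence {J_n} in C_x^I with ∪_n J_n = ∪_{K ∈ C_x^I} K, and a decreasing sequence {K_n} in C_x^I with ∩_n K_n = ∩_{K ∈ C_x^I} K. -/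
open Set Topology

namespace S8

noncomputable def sInv (t : ℝ) : Circle :=
  ⟨⟨(t^2-1)/(t^2+1), (-2*t)/(t^2+1)⟩, by
    have h : (t^2+1) ≠ 0 := by positivity
    show _ ∈ Metric.sphere (0:ℂ) 1
    rw [mem_sphere_zero_iff_norm, Complex.norm_def]
    rw [show Complex.normSq ⟨(t^2-1)/(t^2+1), (-2*t)/(t^2+1)⟩ = 1 by
      rw [Complex.normSq_mk]; field_simp; ring]
    exact Real.sqrt_one⟩

lemma sInv_re (t : ℝ) : ((sInv t : Circle) : ℂ).re = (t^2-1)/(t^2+1) := rfl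
lemma sInv_im (t : ℝ) : ((sInv t : Circle) : ℂ).im = (-2*t)/(t^2+1) := rfl

lemma sInv_ne_one (t : ℝ) : sInv t ≠ 1 := by
  intro h
  have h2 : ((sInv t : Circle) : ℂ).re = 1 := by rw [h]; rfl
  rw [sInv_re] at h2
  have h : (t^2+1) ≠ 0 := by positivity
  rw [div_eq_one_iff_eq h] at h2
  nlinarith

lemma sproj_sInv (t : ℝ) : sproj (sInv t) = t := by
  have h : (t^2+1) ≠ 0 := by positivity
  rw [sproj, sInv_re, sInv_im]
  rw [div_eq_iff]
  · field_simp; ring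
  · intro hc
    rw [sub_eq_zero, div_eq_one_iff_eq h] at hc
    nlinarith

lemma coe_re_ne_one {z : Circle} (h : z ≠ 1) : ((z : Circle) : ℂ).re ≠ 1 := by
  intro hre
  apply h
  have hn : Complex.normSq (z : ℂ) = 1 := Circle.normSq_coe z
  rw [Complex.normSq_apply, hre] at hn
  have him : ((z : Circle) : ℂ).im = 0 := by nlinarith
  ext
  rw [Circle.coe_one]
  exact Complex.ext (by rw [hre]; rfl) (by rw [him]; rfl)

lemma sInv_sproj {z : Circle} (h : z ≠ 1) : sInv (sproj z) = z := by
  have hre : ((z : Circle) : ℂ).re ≠ 1 := coe_re_ne_one h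
  have hre' : ((z : Circle) : ℂ).re - 1 ≠ 0 := sub_ne_zero.2 hre
  have hn : ((z : Circle) : ℂ).re ^ 2 + ((z : Circle) : ℂ).im ^2 = 1 := by
    have := Circle.normSq_coe z; rw [Complex.normSq_apply] at this; nlinarith
  set a := ((z : Circle) : ℂ).re with ha
  set b := ((z : Circle) : ℂ).im with hbdef
  set s := sproj z with hsdef
  have hden : s^2 + 1 ≠ 0 := by positivity
  have hb : b = s * (a - 1) := by rw [hsdef]; show b = b/(a-1) * (a-1); field_simp
  have key : (s^2+1) * (a-1) = -2 := by
    apply mul_left_cancel₀ hre'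
    linear_combination hn - (s*(a-1)+b)*hb
  ext
  apply Complex.ext
  · rw [show ((sInv s : Circle):ℂ).re = (s^2-1)/(s^2+1) from rfl]
    rw [div_eq_iff hden, ← ha]
    apply mul_right_cancel₀ hre'
    linear_combination (1-a)*key
  · rw [show ((sInv s : Circle):ℂ).im = (-2*s)/(s^2+1) from rfl]
    rw [div_eq_iff hden, ← hbdef]
    apply mul_right_cancel₀ hre'
    linear_combination (-b)*key + 2*hb

lemma sproj_injOn {z w : Circle} (hz : z ≠ 1) (hw : w ≠ 1) (h : sproj z = sproj w) : z = w := by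
  rw [← sInv_sproj hz, ← sInv_sproj hw, h]

lemma sproj_inv (z : Circle) : sproj z⁻¹ = - sproj z := by
  have : ((z⁻¹ : Circle) : ℂ) = (starRingEnd ℂ) (z : ℂ) := Circle.coe_inv_eq_conj z
  rw [sproj, sproj, this, Complex.conj_re, Complex.conj_im]
  ring

end S8


namespace S8

lemma sproj_base {w q : Circle} (hw : w ≠ 1) (hq : q ≠ 1) (hqw : q ≠ w) :
    sproj (w⁻¹ * q) = (1 + sproj w * sproj q) / (sproj w - sproj q) := by
  set t := sproj w with ht
  set s := sproj q with hs
  have hst : s ≠ t := fun h => hqw (sproj_injOn hq hw h)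
  have hD : ((t^2+1)*(s^2+1)) ≠ 0 := by positivity
  have hts : t - s ≠ 0 := sub_ne_zero.2 (Ne.symm hst)
  have hw' : w = sInv t := (sInv_sproj hw).symm
  have hq' : q = sInv s := (sInv_sproj hq).symm
  have h1 : ((w⁻¹ * q : Circle) : ℂ).im = 2*(s-t)*(t*s+1)/((t^2+1)*(s^2+1)) := by
    rw [Circle.coe_mul, Circle.coe_inv_eq_conj, Complex.mul_im, Complex.conj_re,
      Complex.conj_im, hw', hq', sInv_re, sInv_im, sInv_re, sInv_im]
    field_simp
    ring
  have h2 : ((w⁻¹ * q : Circle) : ℂ).re - 1 = -(2*(s-t)^2)/((t^2+1)*(s^2+1)) := by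
    rw [Circle.coe_mul, Circle.coe_inv_eq_conj, Complex.mul_re, Complex.conj_re,
      Complex.conj_im, hw', hq', sInv_re, sInv_im, sInv_re, sInv_im]
    field_simp
    ring
  have hB : -(2*(s-t)^2) ≠ 0 :=
    neg_ne_zero.2 (mul_ne_zero two_ne_zero (pow_ne_zero _ (sub_ne_zero.2 hst)))
  rw [sproj, h1, h2]
  field_simp
  ring

lemma one_ne_mul_inv {u p : Circle} (h : p ≠ u) : u⁻¹ * p ≠ 1 := by
  intro hc
  apply h
  have : u * (u⁻¹ * p) = u * 1 := by rw [hc]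
  simpa [mul_assoc] using this

lemma mem_oInt {u v p : Circle} (huv : u ≠ v) (hpu : p ≠ u) (hpv : p ≠ v) :
    p ∈ oInt u v ↔ sproj (u⁻¹ * p) < sproj (u⁻¹ * v) :=
  ⟨fun h => h.2.2.2, fun h => ⟨Ne.symm hpu, hpv, Ne.symm huv, h⟩⟩

lemma oInt_subset_compl_pair {u v : Circle} : oInt u v ⊆ ({u, v} : Set Circle)ᶜ := by
  rintro p ⟨h1, h2, _, _⟩ hmem
  rcases hmem with h | h
  · exact h1 h.symm
  · exact h2 h

/-- the partition lemma -/
lemma mem_oInt_iff_not_rev {u v p : Circle} (huv : u ≠ v) (hpu : p ≠ u) (hpv : p ≠ v) :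
    p ∈ oInt u v ↔ p ∉ oInt v u := by
  have hW : u⁻¹ * v ≠ 1 := one_ne_mul_inv huv.symm
  have hQ : u⁻¹ * p ≠ 1 := one_ne_mul_inv hpu
  set t := sproj (u⁻¹ * v) with ht
  set s := sproj (u⁻¹ * p) with hs
  have hst : s ≠ t := by
    intro h
    exact hpv (mul_left_cancel (a := u⁻¹) (sproj_injOn hQ hW h))
  have hvp : v⁻¹ * p = (u⁻¹*v)⁻¹ * (u⁻¹*p) := by group
  have hvu : v⁻¹ * u = (u⁻¹*v)⁻¹ := by group
  have hQW : u⁻¹ * p ≠ u⁻¹ * v := fun h => hpv (mul_left_cancel h)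
  have hbase : sproj (v⁻¹ * p) = (1 + t * s) / (t - s) := by
    rw [hvp, sproj_base hW hQ hQW]
  have hrev : sproj (v⁻¹ * u) = -t := by rw [hvu, sproj_inv]
  rw [mem_oInt huv hpu hpv, mem_oInt huv.symm hpv hpu, hbase, hrev, ← hs, ← ht]
  constructor
  · intro hlt hc
    rw [div_lt_iff₀ (by linarith : (0:ℝ) < t - s)] at hc
    nlinarith [sq_nonneg t]
  · intro hnot
    rcases lt_or_gt_of_ne hst with h | h
    · exact h
    · exfalso
      apply hnot
      rw [div_lt_iff_of_neg (by linarith : t - s < 0)]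
      nlinarith [sq_nonneg t]

end S8

namespace S8

lemma coe_circle_continuous : Continuous ((↑) : Circle → ℂ) := continuous_induced_dom

lemma isOpen_oInt {u v : Circle} (huv : u ≠ v) : IsOpen (oInt u v) := by
  have heq : oInt u v = (fun p : Circle => ((u⁻¹ * p : Circle) : ℂ)) ⁻¹'
      ({z : ℂ | z.re ≠ 1} ∩ (fun z : ℂ => z.im / (z.re - 1)) ⁻¹' Iio (sproj (u⁻¹*v))) := by
    ext p
    simp only [mem_preimage, mem_inter_iff, mem_setOf_eq, mem_Iio]
    constructor
    · rintro ⟨h1, h2, _, h4⟩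
      exact ⟨coe_re_ne_one (one_ne_mul_inv (Ne.symm h1)), h4⟩
    · rintro ⟨h1, h2⟩
      have hp1 : u⁻¹ * p ≠ 1 := fun hc => h1 (by rw [hc]; rfl)
      have hpu : p ≠ u := fun hc => hp1 (by rw [hc]; exact inv_mul_cancel u)
      have hpv : p ≠ v := by
        intro hc
        subst hc
        exact lt_irrefl _ h2
      exact (mem_oInt huv hpu hpv).2 h2
  rw [heq]
  apply IsOpen.preimage
  · exact coe_circle_continuous.comp (continuous_mul_left u⁻¹)
  · apply ContinuousOn.isOpen_inter_preimage
    · exact ContinuousOn.div Complex.continuous_im.continuousOn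
        (Complex.continuous_re.sub continuous_const).continuousOn
        (fun z hz => sub_ne_zero.2 hz)
    · exact (isOpen_compl_singleton).preimage Complex.continuous_re
    · exact isOpen_Iio

lemma continuous_sInv : Continuous sInv := by
  apply Continuous.subtype_mk
  have heq : (fun t : ℝ => (⟨(t^2-1)/(t^2+1), (-2*t)/(t^2+1)⟩ : ℂ)) =
      fun t : ℝ => (((t^2-1)/(t^2+1) : ℝ) : ℂ) + (((-2*t)/(t^2+1) : ℝ) : ℂ) * Complex.I := by
    funext t
    exact Complex.mk_eq_add_mul_I _ _
  show Continuous (fun t : ℝ => (⟨(t^2-1)/(t^2+1), (-2*t)/(t^2+1)⟩ : ℂ))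
  rw [heq]
  have c1 : Continuous fun t : ℝ => (t^2-1)/(t^2+1) :=
    Continuous.div ((continuous_pow 2).sub continuous_const)
      ((continuous_pow 2).add continuous_const) (fun x => by positivity)
  have c2 : Continuous fun t : ℝ => (-2*t)/(t^2+1) :=
    Continuous.div (continuous_const.mul continuous_id)
      ((continuous_pow 2).add continuous_const) (fun x => by positivity)
  exact ((Complex.continuous_ofReal.comp c1).add
    ((Complex.continuous_ofReal.comp c2).mul continuous_const))

lemma mul_sInv_mem {u v : Circle} (huv : u ≠ v) {x : ℝ} (hx : x < sproj (u⁻¹*v)) :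
    u * sInv x ∈ oInt u v := by
  have h1 : u⁻¹ * (u * sInv x) = sInv x := by group
  have hpu : u * sInv x ≠ u := by
    intro hc
    apply sInv_ne_one x
    have : u⁻¹ * (u * sInv x) = u⁻¹ * u := by rw [hc]
    rw [h1, inv_mul_cancel] at this
    exact this
  have hpv : u * sInv x ≠ v := by
    intro hc
    rw [← hc, h1, sproj_sInv] at hx
    exact lt_irrefl _ hx
  exact (mem_oInt huv hpu hpv).2 (by rw [h1, sproj_sInv]; exact hx)

lemma tendsto_seq_aux (t : ℝ) : Filter.Tendsto (fun n : ℕ => t - 1/((n:ℝ)+1)) Filter.atTop (𝓝 t) := by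
  have h0 := tendsto_one_div_add_atTop_nhds_zero_nat (𝕜 := ℝ)
  simpa using (tendsto_const_nhds (x := t)).sub h0

lemma right_endpoint_mem_closure {u v : Circle} (huv : u ≠ v) : v ∈ closure (oInt u v) := by
  set t := sproj (u⁻¹ * v) with ht
  have hW : u⁻¹ * v ≠ 1 := one_ne_mul_inv huv.symm
  have hv : u * sInv t = v := by rw [ht, sInv_sproj hW]; group
  apply mem_closure_of_tendsto (f := fun n : ℕ => u * sInv (t - 1/((n:ℝ)+1))) (b := Filter.atTop)
  · have h2 := (((continuous_mul_left u).comp continuous_sInv).tendsto t).comp (tendsto_seq_aux t)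
    simpa [Function.comp_def, hv] using h2
  · apply Filter.Eventually.of_forall
    intro n
    apply mul_sInv_mem huv
    rw [← ht]
    have : 0 < 1/((n:ℝ)+1) := by positivity
    linarith

lemma left_endpoint_mem_closure {u v : Circle} (huv : u ≠ v) : u ∈ closure (oInt u v) := by
  set t := sproj (v⁻¹ * u) with ht
  have hW : v⁻¹ * u ≠ 1 := one_ne_mul_inv huv
  have hu : v * sInv t = u := by rw [ht, sInv_sproj hW]; group
  apply mem_closure_of_tendsto (f := fun n : ℕ => v * sInv (t + 1/((n:ℝ)+1))) (b := Filter.atTop)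
  · have haux : Filter.Tendsto (fun n : ℕ => t + 1/((n:ℝ)+1)) Filter.atTop (𝓝 t) := by
      have h0 := tendsto_one_div_add_atTop_nhds_zero_nat (𝕜 := ℝ)
      simpa using (tendsto_const_nhds (x := t)).add h0
    have h2 := (((continuous_mul_left v).comp continuous_sInv).tendsto t).comp haux
    simpa [Function.comp_def, hu] using h2
  · apply Filter.Eventually.of_forall
    intro n
    set y := t + 1/((n:ℝ)+1) with hy
    have hyt : t < y := by
      have : 0 < 1/((n:ℝ)+1) := by positivity
      rw [hy]; linarith
    have h1 : v⁻¹ * (v * sInv y) = sInv y := by group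
    have hpv : v * sInv y ≠ v := by
      intro hc
      apply sInv_ne_one y
      have : v⁻¹ * (v * sInv y) = v⁻¹ * v := by rw [hc]
      rw [h1, inv_mul_cancel] at this
      exact this
    have hpu : v * sInv y ≠ u := by
      intro hc
      rw [← hc, h1, sproj_sInv] at ht
      exact (lt_irrefl _ (ht ▸ hyt)).elim
    apply (mem_oInt_iff_not_rev huv hpu hpv).2
    intro hc
    have := (mem_oInt huv.symm hpv hpu).1 hc
    rw [h1, sproj_sInv, ← ht] at this
    exact lt_irrefl _ (lt_trans this hyt)

end S8

namespace S8

lemma oInt_disjoint_rev {u v p : Circle} (huv : u ≠ v) (hp : p ∈ oInt u v) : p ∉ oInt v u := by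
  have h1 : p ≠ u := Ne.symm hp.1
  have h2 : p ≠ v := hp.2.1
  exact (mem_oInt_iff_not_rev huv h1 h2).1 hp

lemma closure_oInt_subset {u v : Circle} (huv : u ≠ v) :
    closure (oInt u v) ⊆ oInt u v ∪ {u, v} := by
  have hB : IsOpen (oInt v u) := isOpen_oInt huv.symm
  have hsub : oInt u v ⊆ (oInt v u)ᶜ := fun p hp => oInt_disjoint_rev huv hp
  have h1 : closure (oInt u v) ⊆ (oInt v u)ᶜ := by
    have := closure_mono hsub
    rwa [(hB.isClosed_compl).closure_eq] at this
  intro p hp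
  by_cases hpu : p = u
  · exact Or.inr (Or.inl hpu)
  by_cases hpv : p = v
  · exact Or.inr (Or.inr hpv)
  · exact Or.inl ((mem_oInt_iff_not_rev huv hpu hpv).2 (h1 hp))

lemma interior_closure_oInt {u v : Circle} (huv : u ≠ v) :
    interior (closure (oInt u v)) = oInt u v := by
  apply subset_antisymm
  · intro p hp
    have hsub : interior (closure (oInt u v)) ⊆ oInt u v ∪ {u, v} :=
      interior_subset.trans (closure_oInt_subset huv)
    have key : ∀ w, w ∈ closure (oInt v u) → w ∉ interior (closure (oInt u v)) := by
      intro w hw hmem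
      obtain ⟨q, hq1, hq2⟩ := (_root_.mem_closure_iff.1 hw) _ isOpen_interior hmem
      rcases hsub hq1 with h | h
      · exact oInt_disjoint_rev huv h hq2
      · rcases h with h | h
        · exact hq2.2.1 h
        · exact (Ne.symm hq2.1) h
    rcases hsub hp with h | h
    · exact h
    · rcases h with h | h
      · exact absurd hp (h ▸ key u (right_endpoint_mem_closure huv.symm))
      · exact absurd hp (h ▸ key v (left_endpoint_mem_closure huv.symm))
  · exact interior_maximal subset_closure (isOpen_oInt huv)

lemma oInt_infinite {u v : Circle} (huv : u ≠ v) : (oInt u v).Infinite := by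
  set t := sproj (u⁻¹ * v) with ht
  have hsub : (fun x : ℝ => u * sInv x) '' (Iio t) ⊆ oInt u v := by
    rintro _ ⟨x, hx, rfl⟩
    exact mul_sInv_mem huv hx
  apply Set.Infinite.mono hsub
  apply Set.Infinite.image
  · intro x _ y _ hxy
    have : sInv x = sInv y := mul_left_cancel hxy
    rw [← sproj_sInv x, ← sproj_sInv y, this]
  · exact Set.Iio_infinite t

end S8


namespace S8

lemma nd_isOpen {A : Set Circle} (h : IsND A) : IsOpen A := by
  obtain ⟨u, v, huv, rfl⟩ := h
  exact isOpen_oInt huv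

lemma nd_regOpen {A : Set Circle} (h : IsND A) : interior (closure A) = A := by
  obtain ⟨u, v, huv, rfl⟩ := h
  exact interior_closure_oInt huv

lemma nd_compl_infinite {A : Set Circle} (h : IsND A) : Aᶜ.Infinite := by
  obtain ⟨u, v, huv, rfl⟩ := h
  apply (oInt_infinite huv.symm).mono
  intro p hp
  exact oInt_disjoint_rev huv.symm hp

lemma cset_chain {L : Set (Set Circle)} (hL : LamSys L) {I : Set Circle} (hI : IsND I)
    {x : Circle} {J J' : Set Circle} (hJ : J ∈ Cset L x I) (hJ' : J' ∈ Cset L x I) :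
    J ⊆ J' ∨ J' ⊆ J := by
  obtain ⟨hJL, hxJ, hJI⟩ := hJ
  obtain ⟨hJ'L, hxJ', hJ'I⟩ := hJ'
  rcases hL.unlinked J hJL J' hJ'L with (h | h) | (h | h)
  · exact Or.inl h
  · -- dual J ⊆ J' : contradiction
    exfalso
    obtain ⟨u, v, huv, rfl⟩ := hL.nd J hJL
    have hdual : oInt v u ⊆ dual (oInt u v) := by
      apply interior_maximal _ (isOpen_oInt huv.symm)
      intro p hp
      exact oInt_disjoint_rev huv.symm hp
    have hIc : Iᶜ ⊆ ({u, v} : Set Circle) := by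
      intro p hp
      by_contra hpuv
      have hpu : p ≠ u := fun hc => hpuv (Or.inl hc)
      have hpv : p ≠ v := fun hc => hpuv (Or.inr hc)
      by_cases hcase : p ∈ oInt u v
      · exact hp (hJI hcase)
      · have : p ∈ oInt v u := by
          by_contra hc
          exact hcase ((mem_oInt_iff_not_rev huv hpu hpv).2 hc)
        exact hp (hJ'I (h (hdual this)))
    exact nd_compl_infinite hI (Set.Finite.subset ((Set.finite_singleton v).insert u) hIc)
  · -- J ⊆ dual J' : contradiction
    exact absurd ((interior_subset : dual J' ⊆ J'ᶜ) (h hxJ)) (by simpa using hxJ')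
  · -- dual J ⊆ dual J'
    right
    have h1 : J' ⊆ closure J := by
      intro p hp
      by_contra hpc
      have hpd : p ∈ dual J := by rw [dual, interior_compl]; exact hpc
      exact (interior_subset : dual J' ⊆ J'ᶜ) (h hpd) hp
    have h2 : J' ⊆ interior (closure J) := interior_maximal h1 (nd_isOpen (hL.nd J' hJ'L))
    rwa [nd_regOpen (hL.nd J hJL)] at h2

end S8

namespace S8

instance : SecondCountableTopology Circle :=
  inferInstanceAs (SecondCountableTopology (Submonoid.unitSphere ℂ))

lemma chain_seq_up {C : Set (Set Circle)} (f : ℕ → Set Circle) (hf : ∀ n, f n ∈ C)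
    (hchain : ∀ a ∈ C, ∀ b ∈ C, a ⊆ b ∨ b ⊆ a) :
    ∃ g : ℕ → Set Circle, (∀ n, g n ∈ C) ∧ (∀ n, g n ⊆ g (n + 1)) ∧ (∀ n, f n ⊆ g n) := by
  classical
  let g : ℕ → Set Circle :=
    fun n => Nat.rec (f 0) (fun n gn => if f (n+1) ⊆ gn then gn else f (n+1)) n
  have hstep : ∀ n : ℕ, g (n+1) = @ite _ (f (n+1) ⊆ g n) (Classical.propDecidable _) (g n) (f (n+1)) := fun n => rfl
  have hmem : ∀ n, g n ∈ C := by
    intro n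
    induction n with
    | zero => exact hf 0
    | succ n ih =>
      rw [hstep]
      split
      · exact ih
      · exact hf (n+1)
  refine ⟨g, hmem, ?_, ?_⟩
  · intro n
    rw [hstep]
    split
    · exact subset_rfl
    · rcases hchain _ (hmem n) _ (hf (n+1)) with h | h
      · exact h
      · exact absurd h ‹¬ f (n+1) ⊆ g n›
  · intro n
    cases n with
    | zero => exact subset_rfl
    | succ n =>
      rw [hstep]
      split
      · assumption
      · exact subset_rfl

lemma chain_seq_down {C : Set (Set Circle)} (f : ℕ → Set Circle) (hf : ∀ n, f n ∈ C)
    (hchain : ∀ a ∈ C, ∀ b ∈ C, a ⊆ b ∨ b ⊆ a) :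
    ∃ g : ℕ → Set Circle, (∀ n, g n ∈ C) ∧ (∀ n, g (n + 1) ⊆ g n) ∧ (∀ n, g n ⊆ f n) := by
  classical
  let g : ℕ → Set Circle :=
    fun n => Nat.rec (f 0) (fun n gn => if gn ⊆ f (n+1) then gn else f (n+1)) n
  have hstep : ∀ n : ℕ, g (n+1) = @ite _ (g n ⊆ f (n+1)) (Classical.propDecidable _) (g n) (f (n+1)) := fun n => rfl
  have hmem : ∀ n, g n ∈ C := by
    intro n
    induction n with
    | zero => exact hf 0
    | succ n ih =>
      rw [hstep]
      split
      · exact ih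
      · exact hf (n+1)
  refine ⟨g, hmem, ?_, ?_⟩
  · intro n
    rw [hstep]
    split
    · exact subset_rfl
    · rcases hchain _ (hmem n) _ (hf (n+1)) with h | h
      · exact absurd h ‹¬ g n ⊆ f (n+1)›
      · exact h
  · intro n
    cases n with
    | zero => exact subset_rfl
    | succ n =>
      rw [hstep]
      split
      · assumption
      · exact subset_rfl

end S8


open S8

/-- If `C_x^I` is nonempty, it contains an increasing sequence exhausting its union and a
decreasing sequence realizing its intersection. -/
theorem stmt8 (L : Set (Set Circle)) (hL : LamSys L) (I : Set Circle) (hI : IsND I)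
    (x : Circle) (hx : x ∈ I) (hne : (Cset L x I).Nonempty) :
    (∃ J : ℕ → Set Circle, (∀ n, J n ∈ Cset L x I) ∧ (∀ n, J n ⊆ J (n + 1)) ∧
      (⋃ n, J n) = ⋃₀ (Cset L x I)) ∧
    (∃ K : ℕ → Set Circle, (∀ n, K n ∈ Cset L x I) ∧ (∀ n, K (n + 1) ⊆ K n) ∧
      (⋂ n, K n) = ⋂₀ (Cset L x I)) := by
  have hchain : ∀ a ∈ Cset L x I, ∀ b ∈ Cset L x I, a ⊆ b ∨ b ⊆ a :=
    fun a ha b hb => cset_chain hL hI ha hb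
  obtain ⟨K₀, hK₀⟩ := hne
  constructor
  · -- increasing sequence
    obtain ⟨T, hTc, hTsub, hTeq⟩ := TopologicalSpace.isOpen_sUnion_countable (Cset L x I)
      (fun s hs => nd_isOpen (hL.nd s hs.1))
    obtain ⟨f, hf⟩ := (hTc.insert K₀).exists_eq_range ⟨K₀, mem_insert _ _⟩
    have hfmem : ∀ n, f n ∈ Cset L x I := by
      intro n
      have : f n ∈ insert K₀ T := hf ▸ mem_range_self n
      rcases this with h | h
      · exact h ▸ hK₀
      · exact hTsub h
    obtain ⟨g, hg1, hg2, hg3⟩ := chain_seq_up f hfmem hchain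
    refine ⟨g, hg1, hg2, subset_antisymm (iUnion_subset fun n => subset_sUnion_of_mem (hg1 n)) ?_⟩
    rw [← hTeq]
    apply sUnion_subset
    intro s hs
    have : s ∈ range f := hf ▸ mem_insert_of_mem _ hs
    obtain ⟨m, rfl⟩ := this
    exact (hg3 m).trans (subset_iUnion g m)
  · -- decreasing sequence
    by_cases hmin : ∃ K₁ ∈ Cset L x I, ∀ K ∈ Cset L x I, K₁ ⊆ K
    · obtain ⟨K₁, hK₁, hminK⟩ := hmin
      refine ⟨fun _ => K₁, fun _ => hK₁, fun _ => subset_rfl, ?_⟩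
      rw [iInter_const]
      exact subset_antisymm (subset_sInter fun K hK => hminK K hK) (sInter_subset_of_mem hK₁)
    · push_neg at hmin
      set S := (fun K => (closure K)ᶜ) '' (Cset L x I) with hS
      obtain ⟨T, hTc, hTsub, hTeq⟩ := TopologicalSpace.isOpen_sUnion_countable S
        (fun s hs => by obtain ⟨K, hKmem, rfl⟩ := hs; exact isClosed_closure.isOpen_compl)
      have hs₀ : (closure K₀)ᶜ ∈ S := mem_image_of_mem _ hK₀
      obtain ⟨e, he⟩ := (hTc.insert ((closure K₀)ᶜ)).exists_eq_range ⟨_, mem_insert _ _⟩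
      have hemem : ∀ n, ∃ K, K ∈ Cset L x I ∧ (closure K)ᶜ = e n := by
        intro n
        have h1 : e n ∈ insert ((closure K₀)ᶜ) T := he ▸ mem_range_self n
        have h2 : e n ∈ S := by
          rcases h1 with h | h
          · exact h ▸ hs₀
          · exact hTsub h
        obtain ⟨K, hKmem, hKe⟩ := h2
        exact ⟨K, hKmem, hKe⟩
      choose F hF1 hF2 using hemem
      obtain ⟨g, hg1, hg2, hg3⟩ := chain_seq_down F hF1 hchain
      refine ⟨g, hg1, hg2, subset_antisymm ?_ (subset_iInter fun n => sInter_subset_of_mem (hg1 n))⟩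
      apply subset_sInter
      intro K hK
      obtain ⟨K', hK', hnsub⟩ := hmin K hK
      have hK'K : K' ⊆ K := by
        rcases hchain K hK K' hK' with h | h
        · exact absurd h hnsub
        · exact h
      have hKop : IsOpen K := nd_isOpen (hL.nd K hK.1)
      have hnonempty : (K \ closure K').Nonempty := by
        rw [Set.diff_nonempty]
        intro hsub
        have h2 : K ⊆ interior (closure K') := interior_maximal hsub hKop
        rw [nd_regOpen (hL.nd K' hK'.1)] at h2
        exact hnsub h2
      obtain ⟨p, hpK, hpc⟩ := hnonempty
      have hpU : p ∈ ⋃₀ T := by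
        rw [hTeq]
        exact ⟨(closure K')ᶜ, mem_image_of_mem _ hK', hpc⟩
      obtain ⟨s, hsT, hps⟩ := hpU
      have : s ∈ range e := he ▸ mem_insert_of_mem _ hsT
      obtain ⟨n, rfl⟩ := this
      have hpFn : p ∉ F n := fun hc => (hF2 n ▸ hps) (subset_closure hc)
      have hFnK : F n ⊆ K := by
        rcases hchain _ (hF1 n) K hK with h | h
        · exact h
        · exact absurd (h hpK) hpFn
      exact (iInter_subset g n).trans ((hg3 n).trans hFnK)
end

section
/- Let L be a lamination system on S^1 and I ∈ L such that I* is isolated (there is no I*-side sequence of leaves converging to I*). Then there exists a non-leaf gap G of L containing I. -/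
open Set Topology

namespace Stmt9Aux

open Real

noncomputable def arg01 (z : Circle) : ℝ :=
  if 0 < Complex.arg z then Complex.arg z else Complex.arg z + 2 * π

lemma arg_ne_zero {z : Circle} (hz : z ≠ 1) : Complex.arg (z : ℂ) ≠ 0 := by
  intro h
  apply hz
  have h2 := Complex.norm_mul_exp_arg_mul_I (z : ℂ)
  rw [h] at h2
  simp [Circle.norm_coe] at h2
  ext
  simpa using h2.symm

lemma arg01_mem {z : Circle} (hz : z ≠ 1) : arg01 z ∈ Set.Ioo 0 (2 * π) := by
  have h1 := Complex.neg_pi_lt_arg (z : ℂ)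
  have h2 := Complex.arg_le_pi (z : ℂ)
  have h0 := arg_ne_zero hz
  have hpi := Real.pi_pos
  unfold arg01
  split_ifs with h
  · constructor <;> nlinarith
  · push_neg at h
    constructor <;> [nlinarith; nlinarith [lt_of_le_of_ne h h0]]

lemma exp_arg01 (z : Circle) : Circle.exp (arg01 z) = z := by
  have h2 := Complex.norm_mul_exp_arg_mul_I (z : ℂ)
  have habs : ‖(z : ℂ)‖ = 1 := Circle.norm_coe z
  rw [habs] at h2
  have key : Complex.exp (Complex.arg (z : ℂ) * Complex.I) = (z : ℂ) := by
    simpa using h2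
  ext
  rw [Circle.coe_exp]
  unfold arg01
  split_ifs with h
  · exact key
  · push_cast
    rw [add_mul, Complex.exp_add, key]
    have h2pi : Complex.exp (2 * (π : ℂ) * Complex.I) = 1 := Complex.exp_two_pi_mul_I
    rw [show ((2:ℂ) * (π:ℂ) * Complex.I) = 2 * (π:ℂ) * Complex.I from rfl] at h2pi
    rw [h2pi, mul_one]

lemma exp_inj {s t : ℝ} (hs : s ∈ Set.Ico 0 (2 * π)) (ht : t ∈ Set.Ico 0 (2 * π))
    (h : Circle.exp s = Circle.exp t) : s = t := by
  have : Circle.exp (s - t) = 1 := by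
    rw [sub_eq_add_neg, Circle.exp_add, h, ← Circle.exp_add]
    simp
  rw [Circle.exp_eq_one] at this
  obtain ⟨n, hn⟩ := this
  have hpi := Real.pi_pos
  have : n = 0 := by
    rcases lt_trichotomy n 0 with h1 | h1 | h1
    · exfalso
      have : (n : ℝ) ≤ -1 := by exact_mod_cast (by omega : n ≤ -1)
      nlinarith [hs.1, hs.2, ht.1, ht.2]
    · exact h1
    · exfalso
      have : (1 : ℝ) ≤ (n : ℝ) := by exact_mod_cast h1
      nlinarith [hs.1, hs.2, ht.1, ht.2]
  rw [this] at hn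
  simp at hn
  linarith

lemma exp_ne_one {t : ℝ} (ht : t ∈ Set.Ioo 0 (2 * π)) : Circle.exp t ≠ 1 := by
  intro h
  have := exp_inj (Set.mem_Ico.2 ⟨le_of_lt ht.1, ht.2⟩)
    (Set.mem_Ico.2 ⟨le_refl 0, by positivity⟩) (by rw [h, Circle.exp_zero])
  linarith [ht.1]

lemma arg01_exp {t : ℝ} (ht : t ∈ Set.Ioo 0 (2 * π)) : arg01 (Circle.exp t) = t := by
  have hne : Circle.exp t ≠ 1 := exp_ne_one ht
  have hm := arg01_mem hne
  exact exp_inj (Set.mem_Ico.2 ⟨le_of_lt hm.1, hm.2⟩) (Set.mem_Ico.2 ⟨le_of_lt ht.1, ht.2⟩)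
    (by rw [exp_arg01])

/-- canonical representative of `p` relative to basepoint `u`. -/
noncomputable def rep (u p : Circle) : ℝ := open scoped Classical in if p = u then 0 else arg01 (u⁻¹ * p)

lemma rep_mem (u p : Circle) : rep u p ∈ Set.Ico 0 (2 * π) := by
  unfold rep
  split_ifs with h
  · exact ⟨le_refl 0, by positivity⟩
  · have : u⁻¹ * p ≠ 1 := fun hc => h (inv_mul_eq_one.mp hc).symm
    have := arg01_mem this
    exact ⟨le_of_lt this.1, this.2⟩

lemma exp_rep (u p : Circle) : u * Circle.exp (rep u p) = p := by
  unfold rep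
  split_ifs with h
  · rw [Circle.exp_zero, mul_one, h]
  · rw [exp_arg01, mul_inv_cancel_left]

lemma rep_unique {u p : Circle} {s : ℝ} (hs : s ∈ Set.Ico 0 (2 * π))
    (h : u * Circle.exp s = p) : rep u p = s :=
  by subst h; exact exp_inj (rep_mem u _) hs (mul_left_cancel (exp_rep u _))

lemma sproj_exp (t : ℝ) : sproj (Circle.exp t) = Real.sin t / (Real.cos t - 1) := by
  unfold sproj
  rw [Circle.coe_exp]
  rw [Complex.exp_ofReal_mul_I_re, Complex.exp_ofReal_mul_I_im]

lemma cos_ne_one {x : ℝ} (hx : x ∈ Set.Ioo 0 (2 * π)) : Real.cos x ≠ 1 := by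
  intro h
  rw [Real.cos_eq_one_iff] at h
  obtain ⟨n, hn⟩ := h
  have hpi := Real.pi_pos
  have : n = 0 ∨ n ≤ -1 ∨ 1 ≤ n := by omega
  rcases this with h1 | h1 | h1
  · rw [h1] at hn; push_cast at hn; linarith [hx.1]
  · have : (n:ℝ) ≤ -1 := by exact_mod_cast h1
    nlinarith [hx.1, hx.2]
  · have : (1:ℝ) ≤ (n:ℝ) := by exact_mod_cast h1
    nlinarith [hx.1, hx.2]

lemma sprojAux_strictMono : StrictMonoOn (fun t => Real.sin t / (Real.cos t - 1)) (Set.Ioo 0 (2 * π)) := by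
  apply strictMonoOn_of_deriv_pos (convex_Ioo _ _)
  · apply ContinuousOn.div Real.continuous_sin.continuousOn
      (Real.continuous_cos.continuousOn.sub continuousOn_const)
    intro x hx
    have := cos_ne_one hx
    intro h; apply this; linarith [sub_eq_zero.mp h]
  · intro x hx
    rw [interior_Ioo] at hx
    have hne : Real.cos x - 1 ≠ 0 := sub_ne_zero.mpr (cos_ne_one hx)
    have hd : HasDerivAt (fun t => Real.sin t / (Real.cos t - 1))
        ((Real.cos x * (Real.cos x - 1) - Real.sin x * (-Real.sin x)) / (Real.cos x - 1)^2) x := by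
      exact (Real.hasDerivAt_sin x).div ((Real.hasDerivAt_cos x).sub_const 1) hne
    rw [hd.deriv]
    apply div_pos
    · nlinarith [Real.sin_sq_add_cos_sq x, lt_of_le_of_ne (Real.cos_le_one x) (cos_ne_one hx)]
    · positivity

lemma sproj_lt_iff {s t : ℝ} (hs : s ∈ Set.Ioo 0 (2 * π)) (ht : t ∈ Set.Ioo 0 (2 * π)) :
    sproj (Circle.exp s) < sproj (Circle.exp t) ↔ s < t := by
  rw [sproj_exp, sproj_exp]
  exact ⟨fun h => by
    by_contra hc
    push_neg at hc
    rcases eq_or_lt_of_le hc with h1 | h1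
    · rw [h1] at h; exact lt_irrefl _ h
    · exact absurd (sprojAux_strictMono ht hs h1) (not_lt.mpr (le_of_lt h)),
   fun h => sprojAux_strictMono hs ht h⟩

lemma posOri_iff {a b c : Circle} :
    posOri a b c ↔ b ≠ a ∧ c ≠ a ∧ arg01 (a⁻¹ * b) < arg01 (a⁻¹ * c) := by
  constructor
  · rintro ⟨h1, h2, h3, h4⟩
    have hb : a⁻¹ * b ≠ 1 := fun hc => h1 (inv_mul_eq_one.mp hc)
    have hc : a⁻¹ * c ≠ 1 := fun hcc => h3 ((inv_mul_eq_one.mp hcc).symm)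
    refine ⟨h1.symm, h3, ?_⟩
    have e1 := exp_arg01 (a⁻¹ * b)
    have e2 := exp_arg01 (a⁻¹ * c)
    rw [← (sproj_lt_iff (arg01_mem hb) (arg01_mem hc)), e1, e2]
    exact h4
  · rintro ⟨h1, h2, h3⟩
    have hb : a⁻¹ * b ≠ 1 := fun hc => h1 (inv_mul_eq_one.mp hc).symm
    have hc : a⁻¹ * c ≠ 1 := fun hcc => h2 (inv_mul_eq_one.mp hcc).symm
    refine ⟨h1.symm, ?_, h2, ?_⟩
    · intro h
      rw [h] at h3
      exact lt_irrefl _ h3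
    · rw [← exp_arg01 (a⁻¹ * b), ← exp_arg01 (a⁻¹ * c)]
      exact (sproj_lt_iff (arg01_mem hb) (arg01_mem hc)).mpr h3

lemma mem_oInt {u v p : Circle} :
    p ∈ oInt u v ↔ p ≠ u ∧ v ≠ u ∧ arg01 (u⁻¹ * p) < arg01 (u⁻¹ * v) :=
  posOri_iff


lemma shift_inv (w : Circle) (α s : ℝ) :
    (w * Circle.exp α)⁻¹ * (w * Circle.exp s) = Circle.exp (s - α) := by
  rw [Circle.exp_sub, div_eq_mul_inv, mul_inv]
  simp [mul_comm, mul_left_comm, mul_assoc]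

/-- The fundamental parametrization of `oInt`. -/
lemma oInt_eq_image {w : Circle} {α β : ℝ} (h1 : 0 < β - α) (h2 : β - α < 2 * π) :
    oInt (w * Circle.exp α) (w * Circle.exp β) = (fun s => w * Circle.exp s) '' Set.Ioo α β := by
  ext p
  rw [mem_oInt]
  constructor
  · rintro ⟨hp, -, hlt⟩
    set q := (w * Circle.exp α)⁻¹ * p with hq
    have hq1 : q ≠ 1 := fun h => hp (inv_mul_eq_one.mp h).symm
    have hqm := arg01_mem hq1
    have hqe : p = w * Circle.exp (α + arg01 q) := by
      rw [Circle.exp_add, ← mul_assoc]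
      rw [exp_arg01 q, hq, mul_inv_cancel_left]
    have hβ : arg01 ((w * Circle.exp α)⁻¹ * (w * Circle.exp β)) = β - α := by
      rw [shift_inv]
      exact arg01_exp ⟨h1, h2⟩
    rw [hβ] at hlt
    exact ⟨α + arg01 q, ⟨by linarith [hqm.1], by linarith⟩, hqe.symm⟩
  · rintro ⟨s, hs, rfl⟩
    have h3 : (0:ℝ) < s - α := by linarith [hs.1]
    have h4 : s - α < 2 * π := by linarith [hs.2]
    refine ⟨?_, ?_, ?_⟩
    · intro h
      simp only at h
      have h5 : (w * Circle.exp α)⁻¹ * (w * Circle.exp s) = 1 := by rw [h]; group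
      rw [shift_inv] at h5
      exact exp_ne_one ⟨h3, h4⟩ h5
    · intro h
      have h5 : (w * Circle.exp α)⁻¹ * (w * Circle.exp β) = 1 := by rw [h]; group
      rw [shift_inv] at h5
      exact exp_ne_one ⟨h1, h2⟩ h5
    · rw [shift_inv, shift_inv, arg01_exp ⟨h3, h4⟩, arg01_exp ⟨h1, h2⟩]
      linarith [hs.2]

lemma oInt_repr {u v : Circle} (h : v ≠ u) :
    oInt u v = (fun s => u * Circle.exp s) '' Set.Ioo 0 (arg01 (u⁻¹ * v)) := by
  have hne : u⁻¹ * v ≠ 1 := fun hc => h (inv_mul_eq_one.mp hc).symm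
  have hm := arg01_mem hne
  have := oInt_eq_image (w := u) (α := 0) (β := arg01 (u⁻¹ * v))
    (by simpa using hm.1) (by simpa using hm.2)
  rw [Circle.exp_zero, mul_one] at this
  rw [← this, exp_arg01 (u⁻¹ * v), mul_inv_cancel_left]


lemma exp_two_pi : Circle.exp (2 * π) = 1 := Circle.exp_eq_one.mpr ⟨1, by push_cast; ring⟩

lemma point_repr {u p : Circle} (h : p ≠ u) : u * Circle.exp (arg01 (u⁻¹ * p)) = p := by
  rw [exp_arg01, mul_inv_cancel_left]

lemma ne_one_of_ne {u p : Circle} (h : p ≠ u) : u⁻¹ * p ≠ 1 :=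
  fun hc => h (inv_mul_eq_one.mp hc).symm

lemma cont_em (u : Circle) : Continuous (fun s : ℝ => u * Circle.exp s) :=
  continuous_const.mul (map_continuous Circle.exp)

lemma compl_oInt {u v : Circle} (h : v ≠ u) :
    (oInt u v)ᶜ = (fun s => u * Circle.exp s) '' Set.Icc (arg01 (u⁻¹ * v)) (2 * π) := by
  set T := arg01 (u⁻¹ * v) with hTdef
  have hT := arg01_mem (ne_one_of_ne h)
  ext p
  simp only [Set.mem_compl_iff, Set.mem_image]
  constructor
  · intro hp
    by_cases hpu : p = u
    · exact ⟨2 * π, ⟨hT.2.le, le_refl _⟩, by rw [exp_two_pi, mul_one, hpu]⟩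
    · set t := arg01 (u⁻¹ * p) with htdef
      have htm := arg01_mem (ne_one_of_ne hpu)
      have : ¬ (t < T) := by
        intro hlt
        exact hp (mem_oInt.mpr ⟨hpu, h, hlt⟩)
      exact ⟨t, ⟨not_lt.mp this, htm.2.le⟩, point_repr hpu⟩
  · rintro ⟨s, hs, rfl⟩ hmem
    rw [oInt_repr h, Set.mem_image] at hmem
    obtain ⟨t, ht, heq⟩ := hmem
    have heq2 : Circle.exp t = Circle.exp s := mul_left_cancel heq
    have ht2 : t ∈ Set.Ioo 0 (2 * π) := ⟨ht.1, lt_trans ht.2 hT.2⟩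
    rcases eq_or_lt_of_le hs.2 with h1 | h1
    · rw [h1, exp_two_pi] at heq2
      exact exp_ne_one ht2 heq2
    · have := exp_inj ⟨ht2.1.le, ht2.2⟩ ⟨le_trans hT.1.le hs.1, h1⟩ heq2
      linarith [ht.2, hs.1]

lemma isOpen_oInt {u v : Circle} (h : v ≠ u) : IsOpen (oInt u v) := by
  rw [← isClosed_compl_iff, compl_oInt h]
  exact (isCompact_Icc.image (cont_em u)).isClosed

lemma closure_oInt {u v : Circle} (h : v ≠ u) :
    closure (oInt u v) = (fun s => u * Circle.exp s) '' Set.Icc 0 (arg01 (u⁻¹ * v)) := by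
  have hT := arg01_mem (ne_one_of_ne h)
  apply Subset.antisymm
  · apply closure_minimal
    · rw [oInt_repr h]
      exact Set.image_mono Set.Ioo_subset_Icc_self
    · exact (isCompact_Icc.image (cont_em u)).isClosed
  · rw [← closure_Ioo (ne_of_lt hT.1)]
    refine subset_trans (image_closure_subset_closure_image (cont_em u)) ?_
    rw [oInt_repr h]

lemma dual_oInt {u v : Circle} (h : v ≠ u) : dual (oInt u v) = oInt v u := by
  set T := arg01 (u⁻¹ * v) with hTdef
  have hT := arg01_mem (ne_one_of_ne h)
  have hvT : u * Circle.exp T = v := point_repr h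
  have himg : oInt v u = (fun s => u * Circle.exp s) '' Set.Ioo T (2 * π) := by
    have := oInt_eq_image (w := u) (α := T) (β := 2 * π)
      (by linarith [hT.2]) (by linarith [hT.1])
    rw [exp_two_pi, mul_one, hvT] at this
    exact this
  unfold dual
  rw [interior_compl, closure_oInt h, himg]
  ext p
  simp only [Set.mem_compl_iff, Set.mem_image]
  constructor
  · intro hp
    by_cases hpu : p = u
    · exfalso
      exact hp ⟨0, ⟨le_refl _, hT.1.le⟩, by rw [Circle.exp_zero, mul_one, hpu]⟩
    · set t := arg01 (u⁻¹ * p) with htdef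
      have htm := arg01_mem (ne_one_of_ne hpu)
      have : ¬ (t ≤ T) := by
        intro hle
        exact hp ⟨t, ⟨htm.1.le, hle⟩, point_repr hpu⟩
      exact ⟨t, ⟨not_le.mp this, htm.2⟩, point_repr hpu⟩
  · rintro ⟨s, hs, rfl⟩ ⟨s', hs', heq⟩
    have heq2 : Circle.exp s' = Circle.exp s := mul_left_cancel heq
    have := exp_inj ⟨hs'.1, lt_of_le_of_lt hs'.2 hT.2⟩ ⟨le_trans hT.1.le hs.1.le, hs.2⟩ heq2
    linarith [hs'.2, hs.1]

lemma oInt_nonempty {u v : Circle} (h : v ≠ u) : (oInt u v).Nonempty := by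
  have hT := arg01_mem (ne_one_of_ne h)
  rw [oInt_repr h]
  exact ⟨_, Set.mem_image_of_mem _ (⟨by linarith [hT.1], by linarith [hT.1, hT.2]⟩ :
    arg01 (u⁻¹ * v) / 2 ∈ Set.Ioo 0 (arg01 (u⁻¹ * v)))⟩

lemma dual_dual_oInt {u v : Circle} (h : v ≠ u) : dual (dual (oInt u v)) = oInt u v := by
  rw [dual_oInt h, dual_oInt (Ne.symm h)]

lemma dual_eq_compl_closure (X : Set Circle) : dual X = (closure X)ᶜ := interior_compl

lemma dual_subset_compl (X : Set Circle) : dual X ⊆ Xᶜ := interior_subset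

lemma subset_dual_of_disjoint {U X : Set Circle} (hU : IsOpen U) (h : U ∩ X = ∅) :
    U ⊆ dual X :=
  interior_maximal (Set.disjoint_iff_inter_eq_empty.mpr h).subset_compl_right hU

lemma dual_dual_eq (X : Set Circle) : dual (dual X) = interior (closure X) := by
  rw [dual_eq_compl_closure X]
  unfold dual
  rw [compl_compl]

section LFacts

variable {L : Set (Set Circle)}

lemma L_open (hL : LamSys L) {X : Set Circle} (hX : X ∈ L) : IsOpen X := by
  obtain ⟨u, v, huv, rfl⟩ := hL.nd X hX
  exact isOpen_oInt huv.symm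

lemma L_nonempty (hL : LamSys L) {X : Set Circle} (hX : X ∈ L) : X.Nonempty := by
  obtain ⟨u, v, huv, rfl⟩ := hL.nd X hX
  exact oInt_nonempty huv.symm

lemma L_dual_dual (hL : LamSys L) {X : Set Circle} (hX : X ∈ L) : dual (dual X) = X := by
  obtain ⟨u, v, huv, rfl⟩ := hL.nd X hX
  exact dual_dual_oInt huv.symm

lemma L_interior_closure (hL : LamSys L) {X : Set Circle} (hX : X ∈ L) : interior (closure X) = X := by
  rw [← dual_dual_eq]
  exact L_dual_dual hL hX

/-- Intervals of `L` inside `dual I` sharing a point are nested. -/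
lemma chain_lemma (hL : LamSys L) {I J K : Set Circle} (hI : I ∈ L) (hJ : J ∈ L) (hK : K ∈ L)
    (hJD : J ⊆ dual I) (hKD : K ⊆ dual I) (hJK : (J ∩ K).Nonempty) : J ⊆ K ∨ K ⊆ J := by
  have hIne := L_nonempty hL hI
  have hIopen := L_open hL hI
  rcases hL.unlinked J hJ K hK with hc | hc
  · rcases hc with hc | hc
    · exact Or.inl hc
    · exfalso
      have hIJ : I ∩ J = ∅ := by
        rw [Set.eq_empty_iff_forall_notMem]
        rintro p ⟨hp1, hp2⟩
        exact (dual_subset_compl I) (hJD hp2) hp1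
      have h1 : I ⊆ dual J := subset_dual_of_disjoint hIopen hIJ
      have h2 : I ⊆ Iᶜ := fun p hp => (dual_subset_compl I) (hKD (hc (h1 hp)))
      obtain ⟨p, hp⟩ := hIne
      exact h2 hp hp
  · rcases hc with hc | hc
    · exfalso
      obtain ⟨p, hp1, hp2⟩ := hJK
      exact (dual_subset_compl K) (hc hp1) hp2
    · right
      rw [dual_eq_compl_closure, dual_eq_compl_closure, Set.compl_subset_compl] at hc
      calc K = interior K := ((L_open hL hK).interior_eq).symm
        _ ⊆ interior (closure J) := interior_mono (le_trans subset_closure hc)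
        _ = J := L_interior_closure hL hJ

end LFacts

/-- An interval of `L` inside a given interval, in the chart of the latter. -/
lemma arc_in_arc {a b x y : Circle} (hab : b ≠ a) (hxy : y ≠ x)
    (hsub : oInt x y ⊆ oInt a b) :
    ∃ α β : ℝ, 0 ≤ α ∧ α < β ∧ β ≤ arg01 (a⁻¹ * b) ∧
      oInt x y = (fun s => a * Circle.exp s) '' Set.Ioo α β := by
  set T := arg01 (a⁻¹ * b) with hTdef
  have hT := arg01_mem (ne_one_of_ne hab)
  set Tx := arg01 (x⁻¹ * y) with hTxdef
  have hTx := arg01_mem (ne_one_of_ne hxy)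
  set α := rep a x with hαdef
  have hα := rep_mem a x
  have hax : a * Circle.exp α = x := exp_rep a x
  have hkey : ∀ t ∈ Set.Ioo 0 Tx, ∃ s ∈ Set.Ioo 0 T, a * Circle.exp s = a * Circle.exp (α + t) := by
    intro t ht
    have hmem : a * Circle.exp (α + t) ∈ oInt a b := by
      apply hsub
      rw [oInt_repr hxy]
      refine ⟨t, ht, ?_⟩
      show x * Circle.exp t = a * Circle.exp (α + t)
      rw [← hax, Circle.exp_add, mul_assoc]
    rw [oInt_repr hab] at hmem
    obtain ⟨s, hs, hseq⟩ := hmem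
    exact ⟨s, hs, hseq⟩
  have hpi := Real.pi_pos
  -- first: α < T
  set t0 := min Tx (2 * π - α) / 2 with ht0def
  have ht0pos : 0 < t0 := by
    have : 0 < 2 * π - α := by linarith [hα.2]
    have := hTx.1
    positivity
  have ht0lt : t0 < Tx := by
    have h1 : t0 ≤ Tx / 2 := by
      apply div_le_div_of_nonneg_right ?_ ?_ <;> [exact min_le_left _ _; norm_num]
    linarith [hTx.1]
  have ht0small : α + t0 < 2 * π := by
    have h1 : t0 ≤ (2 * π - α) / 2 := by
      apply div_le_div_of_nonneg_right ?_ ?_ <;> [exact min_le_right _ _; norm_num]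
    linarith [hα.2]
  have hαT : α + t0 < T := by
    obtain ⟨s, hs, hseq⟩ := hkey t0 ⟨ht0pos, ht0lt⟩
    have := exp_inj ⟨hs.1.le, lt_trans hs.2 hT.2⟩
      ⟨by linarith [hα.1], ht0small⟩ (mul_left_cancel hseq)
    linarith [hs.2]
  -- second: α + Tx ≤ T
  have hβT : α + Tx ≤ T := by
    by_contra hcon
    push_neg at hcon
    set ts := T - α with htsdef
    have hts : ts ∈ Set.Ioo 0 Tx := ⟨by linarith, by linarith⟩
    obtain ⟨s, hs, hseq⟩ := hkey ts ⟨hts.1, hts.2⟩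
    have hats : α + ts = T := by rw [htsdef]; ring
    rw [hats] at hseq
    have := exp_inj ⟨hs.1.le, lt_trans hs.2 hT.2⟩ ⟨hT.1.le, hT.2⟩ (mul_left_cancel hseq)
    linarith [hs.2]
  refine ⟨α, α + Tx, hα.1, by linarith [hTx.1], hβT, ?_⟩
  have him := oInt_eq_image (w := a) (α := α) (β := α + Tx)
    (by linarith [hTx.1]) (by linarith [hTx.2])
  rw [hax] at him
  have hay : a * Circle.exp (α + Tx) = y := by
    rw [Circle.exp_add, ← mul_assoc, hax]
    exact point_repr hxy
  rw [hay] at him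
  exact him

lemma nd_union {a b : Circle} (hab : b ≠ a) (g : ℕ → Set Circle)
    (hnd : ∀ n, IsND (g n)) (hmono : Monotone g) (hsub : ∀ n, g n ⊆ oInt a b) :
    IsND (⋃ n, g n) := by
  set T := arg01 (a⁻¹ * b) with hTdef
  have hT := arg01_mem (ne_one_of_ne hab)
  have hch : ∀ n, ∃ α β : ℝ, 0 ≤ α ∧ α < β ∧ β ≤ T ∧
      g n = (fun s => a * Circle.exp s) '' Set.Ioo α β := by
    intro n
    obtain ⟨x, y, hxy, hg⟩ := hnd n
    have := arc_in_arc hab hxy.symm (hg ▸ hsub n)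
    rw [← hg] at this
    exact this
  choose α β h0 hαβ hβT him using hch
  have hIoo : ∀ {n m : ℕ}, n ≤ m → Set.Ioo (α n) (β n) ⊆ Set.Ioo (α m) (β m) := by
    intro n m hnm s hs
    have hmem : a * Circle.exp s ∈ g m := (hmono hnm) (by rw [him n]; exact ⟨s, hs, rfl⟩)
    rw [him m] at hmem
    obtain ⟨s', hs', heq⟩ := hmem
    have hss : s' = s := exp_inj
      ⟨le_trans (h0 m) hs'.1.le, lt_of_lt_of_le hs'.2 (le_trans (hβT m) hT.2.le)⟩
      ⟨le_trans (h0 n) hs.1.le, lt_of_lt_of_le hs.2 (le_trans (hβT n) hT.2.le)⟩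
      (mul_left_cancel heq)
    rwa [hss] at hs'
  have hmono2 : ∀ {n m : ℕ}, n ≤ m → α m ≤ α n ∧ β n ≤ β m :=
    fun {n m} hnm => (Set.Ioo_subset_Ioo_iff (hαβ n)).mp (hIoo hnm)
  have hbddb : BddBelow (Set.range α) := ⟨0, by rintro _ ⟨n, rfl⟩; exact h0 n⟩
  have hbdda : BddAbove (Set.range β) := ⟨T, by rintro _ ⟨n, rfl⟩; exact hβT n⟩
  set A := ⨅ n, α n with hAdef
  set B := ⨆ n, β n with hBdef
  have hA0 : 0 ≤ A := le_ciInf h0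
  have hBT : B ≤ T := ciSup_le hβT
  have hAα : ∀ n, A ≤ α n := fun n => ciInf_le hbddb n
  have hβB : ∀ n, β n ≤ B := fun n => le_ciSup hbdda n
  have hAB : A < B := lt_of_le_of_lt (hAα 0) (lt_of_lt_of_le (hαβ 0) (hβB 0))
  have hUnion : (⋃ n, g n) = (fun s => a * Circle.exp s) '' Set.Ioo A B := by
    apply Subset.antisymm
    · refine Set.iUnion_subset fun n => ?_
      rw [him n]
      exact Set.image_mono (fun s hs =>
        ⟨lt_of_le_of_lt (hAα n) hs.1, lt_of_lt_of_le hs.2 (hβB n)⟩)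
    · rintro p ⟨s, hs, rfl⟩
      obtain ⟨n, hn⟩ := exists_lt_of_ciInf_lt hs.1
      obtain ⟨m, hm⟩ := exists_lt_of_lt_ciSup hs.2
      refine Set.mem_iUnion.mpr ⟨max n m, ?_⟩
      rw [him (max n m)]
      exact ⟨s, ⟨lt_of_le_of_lt (hmono2 (le_max_left n m)).1 hn,
        lt_of_lt_of_le hm (hmono2 (le_max_right n m)).2⟩, rfl⟩
  have hA2 : A < 2 * π := lt_of_lt_of_le hAB (le_trans hBT hT.2.le)
  have hB2 : B < 2 * π := lt_of_le_of_lt hBT hT.2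
  refine ⟨a * Circle.exp A, a * Circle.exp B, ?_, ?_⟩
  · intro heq
    have := exp_inj ⟨hA0, hA2⟩ ⟨le_trans hA0 hAB.le, hB2⟩ (mul_left_cancel heq)
    linarith
  · rw [hUnion, oInt_eq_image (by linarith) (by linarith)]

lemma sLiminf_of_monotone {f : ℕ → Set Circle} (hf : Monotone f) :
    sLiminf f = ⋃ n, f n := by
  unfold sLiminf
  ext x
  simp only [Set.mem_iUnion, Set.mem_iInter]
  exact ⟨fun ⟨k, h⟩ => ⟨k, h k (le_refl k)⟩, fun ⟨n, h⟩ => ⟨n, fun m hm => hf hm h⟩⟩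

lemma sLiminf_subset_sLimsup (f : ℕ → Set Circle) : sLiminf f ⊆ sLimsup f := by
  intro x hx
  unfold sLiminf at hx
  unfold sLimsup
  simp only [Set.mem_iUnion, Set.mem_iInter] at hx ⊢
  obtain ⟨k0, h⟩ := hx
  intro k
  exact ⟨max k k0, le_max_left _ _, h _ (le_max_right _ _)⟩

lemma sLimsup_subset_iUnion (f : ℕ → Set Circle) : sLimsup f ⊆ ⋃ n, f n := by
  intro x hx
  unfold sLimsup at hx
  simp only [Set.mem_iInter, Set.mem_iUnion] at hx
  obtain ⟨n, -, h⟩ := hx 0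
  exact Set.mem_iUnion.mpr ⟨n, h⟩

lemma exists_mono_seq {C : Set (Set Circle)}
    (hC : ∀ X ∈ C, ∀ Y ∈ C, X ⊆ Y ∨ Y ⊆ X) (f : ℕ → Set Circle) (hf : ∀ n, f n ∈ C) :
    ∃ g : ℕ → Set Circle, (∀ n, g n ∈ C) ∧ Monotone g ∧
      (⋃ n, g n) = (⋃ n, f n) ∧ ∀ n, f n ⊆ g n := by
  classical
  let g : ℕ → Set Circle :=
    fun n => Nat.rec (f 0) (fun m gm => if f (m+1) ⊆ gm then gm else f (m+1)) n
  have hgs : ∀ n : ℕ, g (n+1) = @ite _ (f (n+1) ⊆ g n) (Classical.propDecidable _) (g n) (f (n+1)) := fun n => rfl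
  have hrange : ∀ n, ∃ m, g n = f m := by
    intro n
    induction n with
    | zero => exact ⟨0, rfl⟩
    | succ n ih =>
      rw [hgs n]
      rcases em (f (n+1) ⊆ g n) with h | h <;> [rewrite [if_pos h]; rewrite [if_neg h]]
      · exact ih
      · exact ⟨n+1, rfl⟩
  have hmem : ∀ n, g n ∈ C := by
    intro n
    obtain ⟨m, hm⟩ := hrange n
    rw [hm]; exact hf m
  have hstep : ∀ n, g n ⊆ g (n+1) := by
    intro n
    rw [hgs n]
    rcases em (f (n+1) ⊆ g n) with h | h <;> [rewrite [if_pos h]; rewrite [if_neg h]]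
    · exact subset_refl _
    · rcases hC _ (hf (n+1)) _ (hmem n) with h1 | h1
      · exact absurd h1 h
      · exact h1
  have hmono : Monotone g := monotone_nat_of_le_succ hstep
  have hfg : ∀ n, f n ⊆ g n := by
    intro n
    cases n with
    | zero => exact subset_refl _
    | succ n =>
      rw [hgs n]
      rcases em (f (n+1) ⊆ g n) with h | h <;> [rewrite [if_pos h]; rewrite [if_neg h]]
      · exact h
      · exact subset_refl _
  refine ⟨g, hmem, hmono, ?_, hfg⟩
  apply Subset.antisymm
  · refine Set.iUnion_subset fun n => ?_
    obtain ⟨m, hm⟩ := hrange n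
    rw [hm]
    exact Set.subset_iUnion f m
  · exact Set.iUnion_subset fun n => le_trans (hfg n) (Set.subset_iUnion g n)

/-- Existence of maximal proper subintervals. -/
lemma m_max {L : Set (Set Circle)} (hL : LamSys L) {I : Set Circle} (hI : I ∈ L)
    (hiso : IsolatedInt L (dual I)) {J : Set Circle}
    (hJ : J ∈ L ∧ J ⊆ dual I ∧ J ≠ dual I) :
    ∃ M, (M ∈ L ∧ M ⊆ dual I ∧ M ≠ dual I) ∧ J ⊆ M ∧
      ∀ K, (K ∈ L ∧ K ⊆ dual I ∧ K ≠ dual I) → M ⊆ K → K = M := by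
  classical
  set D := dual I with hDdef
  set C : Set (Set Circle) := {K | K ∈ L ∧ J ⊆ K ∧ K ⊆ D ∧ K ≠ D} with hCdef
  have hJC : J ∈ C := ⟨hJ.1, subset_refl _, hJ.2.1, hJ.2.2⟩
  have hchain : ∀ X ∈ C, ∀ Y ∈ C, X ⊆ Y ∨ Y ⊆ X := by
    intro X hX Y hY
    apply chain_lemma hL hI hX.1 hY.1 hX.2.2.1 hY.2.2.1
    obtain ⟨p, hp⟩ := L_nonempty hL hJ.1
    exact ⟨p, hX.2.1 hp, hY.2.1 hp⟩
  obtain ⟨Tc, hTcc, hTsub, hTun⟩ := TopologicalSpace.isOpen_sUnion_countable C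
    (fun s hs => L_open hL hs.1)
  set T' : Set (Set Circle) := insert J Tc with hT'def
  have hT'c : T'.Countable := hTcc.insert J
  have hT'sub : T' ⊆ C := Set.insert_subset hJC hTsub
  have hT'un : ⋃₀ T' = ⋃₀ C := by
    rw [Set.sUnion_insert, hTun]
    exact Set.union_eq_self_of_subset_left (fun p hp => ⟨J, hJC, hp⟩)
  obtain ⟨f, hfrange⟩ := hT'c.exists_eq_range ⟨J, Set.mem_insert _ _⟩
  have hf : ∀ n, f n ∈ C := fun n => hT'sub (hfrange ▸ Set.mem_range_self n)
  obtain ⟨g, hgC, hgmono, hgun, hfg⟩ := exists_mono_seq hchain f hf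
  have hunion : (⋃ n, g n) = ⋃₀ C := by
    rw [hgun, ← Set.sUnion_range, ← hfrange, hT'un]
  by_cases hcase : ∃ n, (⋃₀ C : Set Circle) = g n
  · obtain ⟨n, hn⟩ := hcase
    refine ⟨g n, ⟨(hgC n).1, (hgC n).2.2.1, (hgC n).2.2.2⟩, (hgC n).2.1, ?_⟩
    intro K hK hMK
    have hKC : K ∈ C := ⟨hK.1, le_trans (hgC n).2.1 hMK, hK.2.1, hK.2.2⟩
    exact Subset.antisymm (hn ▸ (Set.subset_sUnion_of_mem hKC)) hMK
  · set U : Set Circle := ⋃ n, g n with hUdef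
    obtain ⟨u, v, huv, hIeq⟩ := hL.nd I hI
    have hDeq : D = oInt v u := by rw [hDdef, hIeq, dual_oInt huv.symm]
    have hndU : IsND U := by
      apply nd_union (a := v) (b := u) huv g (fun n => hL.nd _ (hgC n).1) hgmono
      intro n
      rw [← hDeq]
      exact (hgC n).2.2.1
    have hUL : U ∈ L := hL.chainUnion g (fun n => (hgC n).1)
      (fun n => hgmono (Nat.le_succ n)) hndU
    have hUD : U ⊆ D := Set.iUnion_subset fun n => (hgC n).2.2.1
    have hUneD : U ≠ D := by
      intro hUD2
      apply hiso g
      refine ⟨fun n => (hgC n).1, ?_, fun n => Or.inl (hgC n).2.2.1, ?_, ?_, ?_⟩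
      · intro n hmem
        rcases hmem with hmem | hmem
        · exact (hgC n).2.2.2 hmem.symm
        · have h1 : dual (g n) = D := hmem.symm
          obtain ⟨p, hp⟩ := L_nonempty hL (hgC n).1
          have h2 : p ∈ dual (g n) := by rw [h1]; exact (hgC n).2.2.1 hp
          exact (dual_subset_compl (g n) h2) hp
      · rw [sLiminf_of_monotone hgmono, ← hUdef, hUD2]
      · exact sLiminf_subset_sLimsup g
      · refine le_trans (sLimsup_subset_iUnion g) ?_
        rw [← hUdef, hUD2]
        exact subset_closure
    refine ⟨U, ⟨hUL, hUD, hUneD⟩, ?_, ?_⟩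
    · exact le_trans (Set.subset_sUnion_of_mem hJC) hunion.symm.subset
    · intro K hK hMK
      have hKC : K ∈ C := ⟨hK.1,
        le_trans (le_trans (Set.subset_sUnion_of_mem hJC) hunion.symm.subset) hMK,
        hK.2.1, hK.2.2⟩
      exact Subset.antisymm (le_trans (Set.subset_sUnion_of_mem hKC) hunion.symm.subset) hMK

end Stmt9Aux

/-- If `I ∈ L` and `I*` is isolated, then `I` belongs to a non-leaf gap of `L`. -/
theorem stmt9 (L : Set (Set Circle)) (hL : LamSys L) (I : Set Circle) (hI : I ∈ L)
    (hiso : IsolatedInt L (dual I)) :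
    ∃ G, IsGap L G ∧ ¬ IsLeafGap G ∧ I ∈ G := by
  classical
  open Stmt9Aux in
  have hDL : dual I ∈ L := hL.dualMem I hI
  have hIne : I.Nonempty := Stmt9Aux.L_nonempty hL hI
  have hDD : dual (dual I) = I := Stmt9Aux.L_dual_dual hL hI
  have hDcompl : dual I ⊆ Iᶜ := Stmt9Aux.dual_subset_compl I
  set P : Set (Set Circle) := {J | J ∈ L ∧ J ⊆ dual I ∧ J ≠ dual I} with hPdef
  set M : Set (Set Circle) := {J | J ∈ P ∧ ∀ K ∈ P, J ⊆ K → K = J} with hMdef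
  have hInotM : ∀ J ∈ M, I ≠ J := by
    intro J hJ hIJ
    obtain ⟨p, hp⟩ := hIne
    exact hDcompl (hJ.1.2.1 (hIJ ▸ hp)) hp
  have hMmem : ∀ {X : Set Circle}, X ∈ L → X ⊆ dual I → X ≠ dual I →
      ∃ M0 ∈ M, X ⊆ M0 := by
    intro X hX h1 h2
    obtain ⟨M0, hM1, hM2, hM3⟩ := Stmt9Aux.m_max hL hI hiso ⟨hX, h1, h2⟩
    exact ⟨M0, ⟨⟨hM1.1, hM1.2.1, hM1.2.2⟩, fun K hK hMK => hM3 K ⟨hK.1, hK.2.1, hK.2.2⟩ hMK⟩, hM2⟩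
  refine ⟨insert I M, ⟨?_, ?_, ?_⟩, ?_, Set.mem_insert _ _⟩
  · -- subset of L
    rintro X (rfl | hX)
    · exact hI
    · exact hX.1.1
  · -- pairwise disjoint
    have hIM : ∀ J ∈ M, I ∩ J = ∅ := by
      intro J hJ
      rw [Set.eq_empty_iff_forall_notMem]
      rintro p ⟨hp1, hp2⟩
      exact hDcompl (hJ.1.2.1 hp2) hp1
    rintro X (rfl | hX) Y (rfl | hY) hne
    · exact absurd rfl hne
    · exact hIM Y hY
    · rw [Set.inter_comm]; exact hIM X hX
    · by_contra hcon
      rw [← Ne, ← Set.nonempty_iff_ne_empty] at hcon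
      rcases Stmt9Aux.chain_lemma hL hI hX.1.1 hY.1.1 hX.1.2.1 hY.1.2.1 hcon with h | h
      · exact hne (hX.2 Y hY.1 h).symm
      · exact hne (hY.2 X hX.1 h)
  · -- covering
    intro X hX
    by_cases hXI : LiesOn X I
    · exact ⟨I, Set.mem_insert _ _, hXI⟩
    rcases hL.unlinked X hX I hI with h | h
    · exact absurd h hXI
    rcases h with h | h
    · -- X ⊆ dual I
      by_cases hXD : X = dual I
      · exfalso
        apply hXI
        right
        rw [hXD, hDD]
      · obtain ⟨M0, hM0, hXM0⟩ := hMmem hX h hXD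
        exact ⟨M0, Set.mem_insert_of_mem _ hM0, Or.inl hXM0⟩
    · -- dual X ⊆ dual I
      by_cases hXD : dual X = dual I
      · exfalso
        apply hXI
        left
        have : X = I := by
          rw [← Stmt9Aux.L_dual_dual hL hX, hXD, hDD]
        rw [this]
      · obtain ⟨M0, hM0, hXM0⟩ := hMmem (hL.dualMem X hX) h hXD
        exact ⟨M0, Set.mem_insert_of_mem _ hM0, Or.inr hXM0⟩
  · -- not a leaf gap
    rintro ⟨W, hW⟩
    have hIW : I ∈ leafOf W := hW ▸ Set.mem_insert _ _
    have hWmem : W ∈ insert I M := by rw [hW]; left; rfl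
    have hIneD : I ≠ dual I := by
      intro hc
      obtain ⟨p, hp⟩ := hIne
      exact hDcompl (hc ▸ hp) hp
    by_cases hMne : M.Nonempty
    · obtain ⟨J, hJ⟩ := hMne
      have hJW : J ∈ leafOf W := hW ▸ Set.mem_insert_of_mem _ hJ
      have hIJ : I ≠ J := hInotM J hJ
      rcases hIW with hIW | hIW
      · -- I = W
        rcases hJW with hJW | hJW
        · exact hIJ (hIW ▸ hJW.symm ▸ rfl)
        · -- J = dual W = dual I
          exact hJ.1.2.2 (by rw [hJW, ← hIW])
      · -- I = dual W
        rcases hWmem with hWI | hWM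
        · -- W = I, so I = dual I
          exact hIneD (by rw [hWI] at hIW; exact hIW)
        · -- W ∈ M ⊆ L, dual W = I so W = dual I, contradiction with W ∈ P
          apply hWM.1.2.2
          rw [← Stmt9Aux.L_dual_dual hL hWM.1.1, ← hIW]
    · -- M empty : insert I M = {I}
      rcases hWmem with hWI | hWM
      · -- W = I; dual W ∈ insert I M
        have hdW : dual W ∈ insert I M := by
          rw [hW]; exact Set.mem_insert_of_mem _ rfl
        rcases hdW with hdW | hdW
        · rw [hWI] at hdW
          exact hIneD hdW.symm
        · exact hMne ⟨dual W, hdW⟩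
      · exact hMne ⟨W, hWM⟩
end

section
/- Let L be a lamination system on S^1 and G, G' two gaps each with at least 2 elements. Then either G = G', or there exist I ∈ G and I' ∈ G' with I* ⊆ I' such that every leaf ℓ(J) with J ∈ G lies on I', and every leaf ℓ(J') with J' ∈ G' lies on I. -/
open Set Topology

section Stmt10Analysis
open Complex Filter Topology Set
noncomputable section

lemma circle_sq (z : Circle) : (z:ℂ).re * (z:ℂ).re + (z:ℂ).im * (z:ℂ).im = 1 := by
  have := Circle.normSq_coe z
  rwa [Complex.normSq_apply] at this

lemma circle_re_ne (z : Circle) (hz : z ≠ 1) : (z:ℂ).re - 1 ≠ 0 := by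
  intro h
  have h1 : (z:ℂ).re = 1 := by linarith
  have := circle_sq z
  have h2 : (z:ℂ).im = 0 := by nlinarith
  exact hz (Circle.ext (Complex.ext h1 h2))

def gC (t : ℝ) : ℂ := (((t^2-1)/(t^2+1) : ℝ) : ℂ) + (((-2*t/(t^2+1) : ℝ)) : ℂ) * Complex.I

@[simp] lemma gC_re (t : ℝ) : (gC t).re = (t^2-1)/(t^2+1) := by
  simp only [gC, Complex.add_re, Complex.mul_re, Complex.I_re, Complex.I_im,
    Complex.ofReal_re, Complex.ofReal_im]
  ring
@[simp] lemma gC_im (t : ℝ) : (gC t).im = -2*t/(t^2+1) := by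
  simp only [gC, Complex.add_im, Complex.mul_im, Complex.I_re, Complex.I_im,
    Complex.ofReal_re, Complex.ofReal_im]
  ring

lemma cont_gC : Continuous gC := by
  have hc1 : Continuous fun t:ℝ => (t^2-1)/(t^2+1) := by
    apply Continuous.div (by fun_prop) (by fun_prop); intro x; positivity
  have hc2 : Continuous fun t:ℝ => -2*t/(t^2+1) := by
    apply Continuous.div (by fun_prop) (by fun_prop); intro x; positivity
  exact (Complex.continuous_ofReal.comp hc1).add
    ((Complex.continuous_ofReal.comp hc2).mul continuous_const)

def gmap (t : ℝ) : Circle :=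
  ⟨gC t, by
    have ht : (t^2+1) ≠ 0 := by positivity
    have h : ‖gC t‖ ^ 2 = 1 := by
      rw [Complex.sq_norm, Complex.normSq_apply, gC_re, gC_im]
      field_simp
      ring
    have h0 : (0:ℝ) ≤ ‖gC t‖ := norm_nonneg _
    have : ‖gC t‖ = 1 := by nlinarith
    simpa [Submonoid.unitSphere, mem_sphere_zero_iff_norm] using this⟩

@[simp] lemma gmap_coe (t : ℝ) : (gmap t : ℂ) = gC t := rfl

lemma cont_gmap : Continuous gmap := Continuous.subtype_mk cont_gC _

lemma gmap_ne_one (t : ℝ) : gmap t ≠ 1 := by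
  intro h
  have := congrArg (fun z : Circle => (z:ℂ).re) h
  simp only [gmap_coe, gC_re, Circle.coe_one, Complex.one_re] at this
  have ht : (t^2+1) ≠ 0 := by positivity
  field_simp at this
  linarith

lemma sproj_gmap (t : ℝ) : sproj (gmap t) = t := by
  have ht : (t^2+1) ≠ 0 := by positivity
  have h2 : ((gmap t : ℂ).re - 1) = -2/(t^2+1) := by
    rw [gmap_coe, gC_re]
    field_simp
    ring
  unfold sproj
  rw [h2, gmap_coe, gC_im]
  field_simp

lemma gmap_sproj (z : Circle) (hz : z ≠ 1) : gmap (sproj z) = z := by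
  set x := (z:ℂ).re with hx
  set y := (z:ℂ).im with hy
  have hsq : x * x + y * y = 1 := circle_sq z
  have hne : x - 1 ≠ 0 := circle_re_ne z hz
  have hd : (sproj z)^2 + 1 = (2 - 2*x)/((x-1)*(x-1)) := by
    unfold sproj
    rw [← hx, ← hy, div_pow]
    rw [div_add' _ _ _ (by positivity)]
    congr 1
    · nlinarith
    · ring
  have hdne : (sproj z)^2 + 1 ≠ 0 := by positivity
  apply Circle.ext
  apply Complex.ext
  · rw [gmap_coe, gC_re]
    rw [div_eq_iff hdne, hd]
    unfold sproj
    rw [← hx, ← hy, div_pow]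
    field_simp
    nlinarith
  · rw [gmap_coe, gC_im]
    rw [div_eq_iff hdne, hd]
    unfold sproj
    rw [← hx, ← hy]
    field_simp
    nlinarith

lemma tendsto_gmap : Tendsto gmap atTop (𝓝 1) := by
  have hre : Tendsto (fun t : ℝ => (gC t).re) atTop (𝓝 1) := by
    simp only [gC_re]
    have heq : ∀ t : ℝ, (t^2-1)/(t^2+1) = 1 - 2/(t^2+1) := by
      intro t
      have ht : (t^2+1) ≠ 0 := by positivity
      field_simp
      ring
    simp only [heq]
    have h2 : Tendsto (fun t:ℝ => 2/(t^2+1)) atTop (𝓝 0) :=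
      Tendsto.div_atTop tendsto_const_nhds
        (tendsto_atTop_add_const_right _ 1 (tendsto_pow_atTop two_ne_zero))
    simpa using tendsto_const_nhds.sub h2
  have him : Tendsto (fun t : ℝ => (gC t).im) atTop (𝓝 0) := by
    simp only [gC_im]
    apply tendsto_of_tendsto_of_tendsto_of_le_of_le'
      (g := fun t:ℝ => -2/t) (h := fun t:ℝ => 2/t)
    · exact Tendsto.div_atTop tendsto_const_nhds tendsto_id
    · exact Tendsto.div_atTop tendsto_const_nhds tendsto_id
    · filter_upwards [eventually_ge_atTop (1:ℝ)] with t ht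
      rw [div_le_div_iff₀ (by positivity) (by positivity)]
      nlinarith
    · filter_upwards [eventually_ge_atTop (1:ℝ)] with t ht
      rw [div_le_div_iff₀ (by positivity) (by positivity)]
      nlinarith
  have hC : Tendsto gC atTop (𝓝 (1:ℂ)) := by
    have : gC = fun t => ((gC t).re : ℂ) + ((gC t).im : ℂ) * Complex.I := by
      funext t; rw [Complex.re_add_im]
    rw [this]
    have := ((Complex.continuous_ofReal.tendsto 1).comp hre).add
      (((Complex.continuous_ofReal.tendsto 0).comp him).mul
        (tendsto_const_nhds (x := Complex.I)))
    simpa using this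
  exact (Topology.IsEmbedding.subtypeVal).tendsto_nhds_iff.2 hC


lemma contOn_sproj : ContinuousOn sproj {z : Circle | z ≠ 1} := by
  apply ContinuousOn.div
  · exact (Complex.continuous_im.comp continuous_subtype_val).continuousOn
  · exact ((Complex.continuous_re.comp continuous_subtype_val).sub continuous_const).continuousOn
  · intro z hz; exact circle_re_ne z hz

lemma contOn_chart (u : Circle) :
    ContinuousOn (fun p : Circle => sproj (u⁻¹ * p)) {p | p ≠ u} := by
  apply contOn_sproj.comp (continuous_mul_left u⁻¹).continuousOn
  intro p hp
  show u⁻¹ * p ∈ {z : Circle | z ≠ 1}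
  simp only [Set.mem_setOf_eq, ne_eq]
  exact fun h => hp (inv_mul_eq_one.mp h).symm

lemma isOpen_chart_lt (u : Circle) (c : ℝ) :
    IsOpen {p : Circle | p ≠ u ∧ sproj (u⁻¹ * p) < c} := by
  have h := (contOn_chart u).isOpen_inter_preimage isOpen_ne isOpen_Iio (t := Set.Iio c)
  have he : {p : Circle | p ≠ u ∧ sproj (u⁻¹ * p) < c}
      = {p : Circle | p ≠ u} ∩ (fun p : Circle => sproj (u⁻¹ * p)) ⁻¹' Set.Iio c := by
    ext p
    simp only [Set.mem_setOf_eq, Set.mem_inter_iff, Set.mem_preimage, Set.mem_Iio]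
  rw [he]; exact h

lemma isOpen_chart_gt (u : Circle) (c : ℝ) :
    IsOpen {p : Circle | p ≠ u ∧ c < sproj (u⁻¹ * p)} := by
  have h := (contOn_chart u).isOpen_inter_preimage isOpen_ne isOpen_Ioi (t := Set.Ioi c)
  have he : {p : Circle | p ≠ u ∧ c < sproj (u⁻¹ * p)}
      = {p : Circle | p ≠ u} ∩ (fun p : Circle => sproj (u⁻¹ * p)) ⁻¹' Set.Ioi c := by
    ext p
    simp only [Set.mem_setOf_eq, Set.mem_inter_iff, Set.mem_preimage, Set.mem_Ioi]
  rw [he]; exact h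

lemma oInt_eq (u v : Circle) (huv : u ≠ v) :
    oInt u v = {p : Circle | p ≠ u ∧ sproj (u⁻¹ * p) < sproj (u⁻¹ * v)} := by
  ext p
  simp only [oInt, posOri, Set.mem_setOf_eq]
  constructor
  · rintro ⟨h1, _, _, h4⟩; exact ⟨h1.symm, h4⟩
  · rintro ⟨h1, h4⟩
    refine ⟨h1.symm, ?_, huv.symm, h4⟩
    rintro rfl; exact lt_irrefl _ h4

lemma nd_isOpen {I : Set Circle} (h : IsND I) : IsOpen I := by
  obtain ⟨u, v, huv, rfl⟩ := h
  rw [oInt_eq u v huv]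
  exact isOpen_chart_lt u _

lemma mul_gmap_ne (u : Circle) (t : ℝ) : u * gmap t ≠ u := by
  intro h
  apply gmap_ne_one t
  have : u * gmap t = u * 1 := by rwa [mul_one]
  exact mul_left_cancel this

lemma sproj_mul_gmap (u : Circle) (t : ℝ) : sproj (u⁻¹ * (u * gmap t)) = t := by
  rw [inv_mul_cancel_left, sproj_gmap]

lemma nd_nonempty {I : Set Circle} (h : IsND I) : I.Nonempty := by
  obtain ⟨u, v, huv, rfl⟩ := h
  rw [oInt_eq u v huv]
  refine ⟨u * gmap (sproj (u⁻¹ * v) - 1), mul_gmap_ne u _, ?_⟩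
  rw [sproj_mul_gmap]
  linarith

lemma nd_interior_closure {I : Set Circle} (h : IsND I) : interior (closure I) = I := by
  obtain ⟨u, v, huv, rfl⟩ := h
  set c := sproj (u⁻¹ * v) with hc
  have hIeq : oInt u v = {p : Circle | p ≠ u ∧ sproj (u⁻¹ * p) < c} := oInt_eq u v huv
  have hIopen : IsOpen (oInt u v) := by rw [hIeq]; exact isOpen_chart_lt u c
  set D := {p : Circle | p ≠ u ∧ c < sproj (u⁻¹ * p)} with hD
  have hDopen : IsOpen D := isOpen_chart_gt u c
  have hIC : oInt u v ⊆ Dᶜ := by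
    rw [hIeq]
    rintro p ⟨h1, h2⟩ ⟨h3, h4⟩
    exact absurd h2 (not_lt.2 (le_of_lt h4))
  have hclosure : closure (oInt u v) ⊆ Dᶜ :=
    closure_minimal hIC (isClosed_compl_iff.2 hDopen)
  apply subset_antisymm
  · intro p hp
    have h1 : closure (oInt u v) ∈ 𝓝 p :=
      mem_nhds_iff.2 ⟨interior (closure (oInt u v)), interior_subset, isOpen_interior, hp⟩
    have hDc : Dᶜ ∈ 𝓝 p := Filter.mem_of_superset h1 hclosure
    by_cases hpu : p = u
    · exfalso
      subst hpu
      have hG : Tendsto (fun t => p * gmap t) atTop (𝓝 p) := by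
        have := ((continuous_mul_left p).tendsto 1).comp tendsto_gmap
        simpa [Function.comp_def] using this
      have hev : ∀ᶠ t in atTop, (p * gmap t) ∈ Dᶜ := hG hDc
      obtain ⟨t, ht1, ht2⟩ := (hev.and (eventually_gt_atTop c)).exists
      exact ht1 ⟨mul_gmap_ne p t, by rwa [sproj_mul_gmap]⟩
    · have hp' : p ∈ Dᶜ := hclosure (interior_subset hp)
      have hle : sproj (u⁻¹ * p) ≤ c := by
        by_contra hlt
        exact hp' ⟨hpu, not_le.1 hlt⟩
      rcases lt_or_eq_of_le hle with hlt | heq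
      · rw [hIeq]; exact ⟨hpu, hlt⟩
      · exfalso
        set t0 := sproj (u⁻¹ * p) with ht0
        have hne1 : u⁻¹ * p ≠ 1 :=
          fun h => hpu (inv_mul_eq_one.mp h).symm
        have hGp : u * gmap t0 = p := by
          rw [ht0, gmap_sproj _ hne1, mul_inv_cancel_left]
        have hcont : Tendsto (fun t => u * gmap t) (𝓝[>] t0) (𝓝 p) := by
          have h2 : Tendsto (fun t => u * gmap t) (𝓝 t0) (𝓝 (u * gmap t0)) :=
            ((continuous_mul_left u).comp cont_gmap).tendsto t0
          rw [hGp] at h2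
          exact h2.mono_left nhdsWithin_le_nhds
        have hev : ∀ᶠ t in 𝓝[>] t0, (u * gmap t) ∈ Dᶜ := hcont hDc
        have hev2 : ∀ᶠ t in 𝓝[>] t0, t0 < t := eventually_mem_nhdsWithin
        obtain ⟨t, ht1, ht2⟩ := (hev.and hev2).exists
        apply ht1
        refine ⟨mul_gmap_ne u t, ?_⟩
        rw [sproj_mul_gmap]
        rw [heq] at ht2
        exact ht2
  · exact interior_maximal subset_closure hIopen

lemma dual_dual {I : Set Circle} (h : IsND I) : dual (dual I) = I := by
  show interior (interior Iᶜ)ᶜ = I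
  rw [← closure_eq_compl_interior_compl]
  exact nd_interior_closure h

end
end Stmt10Analysis

/-- Two gaps with at least two elements either coincide, or are "unlinked" via a pair of
intervals `I ∈ G`, `I' ∈ G'` with `I* ⊆ I'`. -/
theorem stmt10 (L : Set (Set Circle)) (hL : LamSys L) (G G' : Set (Set Circle))
    (hG : IsGap L G) (hG' : IsGap L G') (h2 : G.Nontrivial) (h2' : G'.Nontrivial) :
    G = G' ∨ ∃ I ∈ G, ∃ I' ∈ G', dual I ⊆ I' ∧
      (∀ J ∈ G, LiesOn J I') ∧ (∀ J' ∈ G', LiesOn J' I) := by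
  obtain ⟨hG1, hG2, hG3⟩ := hG
  obtain ⟨hG'1, hG'2, hG'3⟩ := hG'
  by_cases hkey : ∃ I ∈ G, ∃ I' ∈ G', dual I ⊆ I'
  · right
    obtain ⟨I, hI, I', hI', hd⟩ := hkey
    have hInd : IsND I := hL.nd I (hG1 hI)
    have hIdd : dual (dual I) = I := dual_dual hInd
    refine ⟨I, hI, I', hI', hd, ?_, ?_⟩
    · intro J hJ
      by_cases hJI : J = I
      · rw [hJI]; exact Or.inr hd
      · left
        have hdisj : J ∩ I = ∅ := hG2 J hJ I hI hJI
        have hJo : IsOpen J := nd_isOpen (hL.nd J (hG1 hJ))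
        have hJc : J ⊆ Iᶜ := by
          intro x hx hxI
          have hmem : x ∈ J ∩ I := ⟨hx, hxI⟩
          rw [hdisj] at hmem
          exact hmem
        exact (interior_maximal hJc hJo).trans hd
    · intro J' hJ'
      have hcl : I'ᶜ ⊆ (dual I)ᶜ := compl_subset_compl.2 hd
      by_cases hJI : J' = I'
      · right
        rw [hJI]
        calc dual I' = interior I'ᶜ := rfl
          _ ⊆ interior (dual I)ᶜ := interior_mono hcl
          _ = I := hIdd
      · left
        have hdisj : J' ∩ I' = ∅ := hG'2 J' hJ' I' hI' hJI
        have hJo : IsOpen J' := nd_isOpen (hL.nd J' (hG'1 hJ'))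
        have hJc : J' ⊆ (dual I)ᶜ := by
          intro x hx
          apply hcl
          intro hxI'
          have hmem : x ∈ J' ∩ I' := ⟨hx, hxI'⟩
          rw [hdisj] at hmem
          exact hmem
        calc J' ⊆ interior (dual I)ᶜ := interior_maximal hJc hJo
          _ = I := hIdd
  · left
    have step1 : ∀ I ∈ G, ∃ I' ∈ G', I ⊆ I' := by
      intro I hI
      obtain ⟨I', hI', hlies⟩ := hG'3 (dual I) (hL.dualMem I (hG1 hI))
      rcases hlies with h | h
      · exact absurd ⟨I, hI, I', hI', h⟩ hkey
      · rw [dual_dual (hL.nd I (hG1 hI))] at h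
        exact ⟨I', hI', h⟩
    have step2 : ∀ I' ∈ G', ∃ J ∈ G, I' ⊆ J := by
      intro I' hI'
      obtain ⟨J, hJ, hlies⟩ := hG3 I' (hG'1 hI')
      rcases hlies with h | h
      · exact ⟨J, hJ, h⟩
      · exfalso
        apply hkey
        refine ⟨J, hJ, I', hI', ?_⟩
        calc dual J = interior Jᶜ := rfl
          _ ⊆ interior (dual I')ᶜ := interior_mono (compl_subset_compl.2 h)
          _ = I' := dual_dual (hL.nd I' (hG'1 hI'))
    apply Set.Subset.antisymm
    · intro I hI
      obtain ⟨I', hI', h1⟩ := step1 I hI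
      obtain ⟨J, hJ, h2⟩ := step2 I' hI'
      have hIJ : I = J := by
        by_contra hne
        have hd := hG2 I hI J hJ hne
        obtain ⟨x, hx⟩ := nd_nonempty (hL.nd I (hG1 hI))
        have hmem : x ∈ I ∩ J := ⟨hx, h2 (h1 hx)⟩
        rw [hd] at hmem
        exact hmem
      have hsub : I' ⊆ I := by rw [hIJ]; exact h2
      have heq : I' = I := Set.Subset.antisymm hsub h1
      rw [heq] at hI'
      exact hI'
    · intro I' hI'
      obtain ⟨J, hJ, h1⟩ := step2 I' hI'
      obtain ⟨K, hK, h2⟩ := step1 J hJ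
      have hIK : I' = K := by
        by_contra hne
        have hd := hG'2 I' hI' K hK hne
        obtain ⟨x, hx⟩ := nd_nonempty (hL.nd I' (hG'1 hI'))
        have hmem : x ∈ I' ∩ K := ⟨hx, h2 (h1 hx)⟩
        rw [hd] at hmem
        exact hmem
      have hsub : J ⊆ I' := by rw [hIK]; exact h2
      have heq : J = I' := Set.Subset.antisymm hsub h1
      rw [heq] at hJ
      exact hJ
end
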